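/- arXiv:1709.01210 — 4 statements merged into one kernel-verified Lean document; each statement's English description precedes it below -/
import Mathlib

section
/- For 0 < α ≤ 2 and 0 < p < α, the integral ∫_0^∞ (e^{-u^α} - 1) u^{-p-1} du equals -Γ(1 - p/α)/p. -/
open Real MeasureTheory

theorem stmt_1 (α p : ℝ) (hα0 : 0 < α) (hα2 : α ≤ 2) (hp0 : 0 < p) (hpα : p < α) :
    ∫ u in Set.Ioi (0:ℝ), (Real.exp (-(u ^ α)) - 1) * u ^ (-p - 1)
      = -Real.Gamma (1 - p / α) / p := by
  set F : ℝ → ℝ := fun u => (Real.exp (-(u ^ α)) - 1) * u ^ (-p) / (-p) with hF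
  set f' : ℝ → ℝ := fun u =>
    (α / p) * (u ^ (α - 1 - p) * Real.exp (-(u ^ α)))
      + (Real.exp (-(u ^ α)) - 1) * u ^ (-p - 1) with hf'
  -- derivative
  have hderiv : ∀ u ∈ Set.Ioi (0:ℝ), HasDerivAt F (f' u) u := by
    intro u hu
    have hu0 : (0:ℝ) < u := hu
    have h1 : HasDerivAt (fun x : ℝ => x ^ α) (α * u ^ (α - 1)) u :=
      Real.hasDerivAt_rpow_const (Or.inl hu0.ne')
    have h2 : HasDerivAt (fun x : ℝ => Real.exp (-(x ^ α)) - 1)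
        (Real.exp (-(u ^ α)) * -(α * u ^ (α - 1))) u := (h1.neg.exp).sub_const 1
    have h3 : HasDerivAt (fun x : ℝ => x ^ (-p)) (-p * u ^ (-p - 1)) u := by
      simpa using Real.hasDerivAt_rpow_const (p := -p) (Or.inl hu0.ne')
    have h4 := (h2.mul h3).div_const (-p)
    convert h4 using 1
    · rfl
    · rfl
    · rfl
    have hup : u ^ (α - 1) * u ^ (-p) = u ^ (α - 1 - p) := by
      rw [← Real.rpow_add hu0]; ring_nf
    have hup2 : u ^ (α - 1 - p) = u ^ (α - 1) * u ^ (-p) := hup.symm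
    simp only [hf', hup2]
    rw [eq_div_iff (neg_ne_zero.mpr hp0.ne')]
    field_simp
    ring
  -- integrability of first piece
  have hI1 : IntegrableOn (fun u : ℝ => u ^ (α - 1 - p) * Real.exp (-(u ^ α)))
      (Set.Ioi 0) := by
    have hG := Real.GammaIntegral_convergent (s := 1 - p / α)
      (by rw [sub_pos]; exact (div_lt_one hα0).mpr hpα)
    have := (integrableOn_Ioi_comp_rpow_iff'
      (fun y : ℝ => Real.exp (-y) * y ^ (1 - p / α - 1)) hα0.ne').mpr hG
    refine this.congr_fun (fun x hx => ?_) measurableSet_Ioi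
    have hx0 : (0:ℝ) < x := hx
    have h5 : (x ^ α) ^ (1 - p / α - 1) = x ^ (-p) := by
      rw [← Real.rpow_mul hx0.le]
      congr 1
      field_simp
      ring
    simp only [smul_eq_mul, h5]
    rw [show x ^ (α - 1 - p) = x ^ (α - 1) * x ^ (-p) by
      rw [← Real.rpow_add hx0]; ring_nf]
    ring
  -- integrability of second piece
  have hc1 : ContinuousOn (fun u : ℝ => (Real.exp (-(u ^ α)) - 1) * u ^ (-p - 1))
      (Set.Ioi 0) := by
    apply ContinuousOn.mul
    · exact ((ContinuousOn.rexp (ContinuousOn.neg (continuousOn_id.rpow_const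
        (fun x hx => Or.inl (ne_of_gt hx))))).sub continuousOn_const)
    · exact continuousOn_id.rpow_const (fun x hx => Or.inl (ne_of_gt hx))
  have hbound : ∀ u : ℝ, 0 < u → |Real.exp (-(u ^ α)) - 1| ≤ u ^ α := by
    intro u hu
    have h0 : (0:ℝ) ≤ u ^ α := (Real.rpow_pos_of_pos hu α).le
    have h1 : Real.exp (-(u ^ α)) ≤ 1 := Real.exp_le_one_iff.mpr (by linarith)
    have h2 : 1 - u ^ α ≤ Real.exp (-(u ^ α)) := by
      have := Real.add_one_le_exp (-(u ^ α)); linarith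
    rw [abs_sub_comm, abs_of_nonneg (by linarith)]
    linarith
  have hI2a : IntegrableOn (fun u : ℝ => (Real.exp (-(u ^ α)) - 1) * u ^ (-p - 1))
      (Set.Ioc 0 1) := by
    refine Integrable.mono' (g := fun u : ℝ => u ^ (α - p - 1))
      ((intervalIntegral.intervalIntegrable_rpow' (by linarith)).1)
      ((hc1.mono Set.Ioc_subset_Ioi_self).aestronglyMeasurable measurableSet_Ioc) ?_
    rw [ae_restrict_iff' measurableSet_Ioc]
    refine Filter.Eventually.of_forall (fun u hu => ?_)
    have hu0 : (0:ℝ) < u := hu.1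
    have h6 : (0:ℝ) ≤ u ^ (-p - 1) := (Real.rpow_pos_of_pos hu0 _).le
    rw [norm_mul, Real.norm_eq_abs, Real.norm_eq_abs, abs_of_nonneg h6]
    calc |Real.exp (-(u ^ α)) - 1| * u ^ (-p - 1) ≤ u ^ α * u ^ (-p - 1) :=
          mul_le_mul_of_nonneg_right (hbound u hu0) h6
      _ = u ^ (α - p - 1) := by rw [← Real.rpow_add hu0]; ring_nf
  have hI2b : IntegrableOn (fun u : ℝ => (Real.exp (-(u ^ α)) - 1) * u ^ (-p - 1))
      (Set.Ioi 1) := by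
    refine Integrable.mono' (g := fun u : ℝ => u ^ (-p - 1))
      (integrableOn_Ioi_rpow_of_lt (by linarith) one_pos)
      ((hc1.mono (Set.Ioi_subset_Ioi zero_le_one)).aestronglyMeasurable measurableSet_Ioi) ?_
    rw [ae_restrict_iff' measurableSet_Ioi]
    refine Filter.Eventually.of_forall (fun u hu => ?_)
    have hu0 : (0:ℝ) < u := lt_trans one_pos hu
    have h6 : (0:ℝ) ≤ u ^ (-p - 1) := (Real.rpow_pos_of_pos hu0 _).le
    rw [norm_mul, Real.norm_eq_abs, Real.norm_eq_abs, abs_of_nonneg h6]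
    have h7 : |Real.exp (-(u ^ α)) - 1| ≤ 1 := by
      have h0 : (0:ℝ) ≤ u ^ α := (Real.rpow_pos_of_pos hu0 α).le
      have h1 : Real.exp (-(u ^ α)) ≤ 1 := Real.exp_le_one_iff.mpr (by linarith)
      have h2 : 0 < Real.exp (-(u ^ α)) := Real.exp_pos _
      rw [abs_sub_comm, abs_of_nonneg (by linarith)]; linarith
    nlinarith [h6]
  have hI2 : IntegrableOn (fun u : ℝ => (Real.exp (-(u ^ α)) - 1) * u ^ (-p - 1))
      (Set.Ioi 0) := by
    rw [← Set.Ioc_union_Ioi_eq_Ioi (zero_le_one : (0:ℝ) ≤ 1)]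
    exact hI2a.union hI2b
  have hIf' : IntegrableOn f' (Set.Ioi 0) := (hI1.const_mul (α / p)).add hI2
  -- continuity at 0 within Ici
  have hF0 : F 0 = 0 := by
    simp [hF, Real.zero_rpow (show -p ≠ 0 by linarith)]
  have hcont : ContinuousWithinAt F (Set.Ici 0) 0 := by
    rw [ContinuousWithinAt, hF0]
    apply squeeze_zero_norm' (a := fun u : ℝ => u ^ (α - p) / p)
    · filter_upwards [self_mem_nhdsWithin] with u hu
      rcases eq_or_lt_of_le (Set.mem_Ici.mp hu : (0:ℝ) ≤ u) with h | h
      · rw [← h]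
        simp [hF, Real.zero_rpow (show -p ≠ 0 by linarith),
          Real.zero_rpow (show α - p ≠ 0 by linarith)]
      · have h6 : (0:ℝ) ≤ u ^ (-p) := (Real.rpow_pos_of_pos h _).le
        rw [hF]
        simp only [Real.norm_eq_abs, abs_div, abs_mul, abs_of_nonneg h6, abs_neg,
          abs_of_pos hp0]
        rw [div_le_div_iff_of_pos_right hp0]
        calc |Real.exp (-(u ^ α)) - 1| * u ^ (-p) ≤ u ^ α * u ^ (-p) :=
              mul_le_mul_of_nonneg_right (hbound u h) h6
          _ = u ^ (α - p) := by rw [← Real.rpow_add h]; ring_nf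
    · have : ContinuousAt (fun u : ℝ => u ^ (α - p) / p) 0 := by
        apply ContinuousAt.div_const
        exact (Real.continuousAt_rpow_const 0 (α - p) (Or.inr (by linarith)))
      have h0 : (0:ℝ) ^ (α - p) / p = 0 := by
        rw [Real.zero_rpow (show α - p ≠ 0 by linarith)]; simp
      have h : Filter.Tendsto (fun u : ℝ => u ^ (α - p) / p)
          (nhdsWithin 0 (Set.Ici 0)) (nhds ((0:ℝ) ^ (α - p) / p)) :=
        this.continuousWithinAt
      rwa [h0] at h
  -- limit at infinity
  have htop : Filter.Tendsto F Filter.atTop (nhds 0) := by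
    have h1 : Filter.Tendsto (fun u : ℝ => Real.exp (-(u ^ α)) - 1) Filter.atTop
        (nhds (0 - 1)) := by
      apply Filter.Tendsto.sub_const
      exact (Real.tendsto_exp_atBot).comp
        (Filter.tendsto_neg_atTop_atBot.comp (tendsto_rpow_atTop hα0))
    have h2 : Filter.Tendsto (fun u : ℝ => u ^ (-p)) Filter.atTop (nhds 0) :=
      tendsto_rpow_neg_atTop hp0
    have := (h1.mul h2).div_const (-p)
    simpa using this
  have hFTC := integral_Ioi_of_hasDerivAt_of_tendsto hcont hderiv hIf' htop
  rw [hF0, sub_zero] at hFTC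
  have hsplit : ∫ u in Set.Ioi (0:ℝ), f' u
      = (α / p) * ((1 / α) * Real.Gamma (1 - p / α))
        + ∫ u in Set.Ioi (0:ℝ), (Real.exp (-(u ^ α)) - 1) * u ^ (-p - 1) := by
    simp only [hf']
    rw [integral_add (hI1.const_mul (α / p)) hI2, integral_const_mul,
      integral_rpow_mul_exp_neg_rpow hα0 (by linarith : (-1:ℝ) < α - 1 - p),
      show α - 1 - p + 1 = α - p by ring,
      show (α - p) / α = 1 - p / α by rw [sub_div, div_self hα0.ne']]
  rw [hsplit] at hFTC
  have hkey : α / p * (1 / α * Real.Gamma (1 - p / α)) = Real.Gamma (1 - p / α) / p := by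
    field_simp
  rw [hkey] at hFTC
  rw [neg_div]
  linarith
end

section
/- For a > 0, b real, and d > -1 with d ≠ 0, ∫_0^∞ u^{d-1} e^{-au} sin(bu) du = Γ(d) (a² + b²)^{-d/2} sin(d·arctan(b/a)), where for -1 < d < 0 the value Γ(d) is defined via Γ(d) = Γ(d+1)/d. -/
open Real MeasureTheory Set Filter

-- L1: basic integrability
lemma aux_int {c a : ℝ} (hc : -1 < c) (ha : 0 < a) :
    IntegrableOn (fun u : ℝ => u ^ c * Real.exp (-(a * u))) (Ioi 0) := by
  have h0 : (0:ℝ) < c + 1 := by linarith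
  have h := Real.GammaIntegral_convergent h0
  have h2 : IntegrableOn (fun x : ℝ => Real.exp (-(a * x)) * (a * x) ^ (c + 1 - 1)) (Ioi 0) := by
    have := (integrableOn_Ioi_comp_mul_left_iff
      (fun x : ℝ => Real.exp (-x) * x ^ (c + 1 - 1)) 0 ha).mpr
    simp only [mul_zero] at this
    exact this h
  have h3 : IntegrableOn (fun x : ℝ => a ^ c * (x ^ c * Real.exp (-(a * x)))) (Ioi 0) :=
    h2.congr_fun (fun x hx => by
      rw [mem_Ioi] at hx
      rw [add_sub_cancel_right]; beta_reduce; rw [Real.mul_rpow ha.le hx.le]; ring) measurableSet_Ioi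
  have h4 := h3.const_mul ((a:ℝ) ^ c)⁻¹
  have he : (fun x : ℝ => ((a:ℝ) ^ c)⁻¹ * (a ^ c * (x ^ c * Real.exp (-(a * x)))))
      = fun x : ℝ => x ^ c * Real.exp (-(a * x)) := by
    funext x
    rw [← mul_assoc, inv_mul_cancel₀ (by positivity : (a:ℝ) ^ c ≠ 0), one_mul]
  rwa [he] at h4

lemma aux_cont {c : ℝ} : ContinuousOn (fun u : ℝ => u ^ c) (Ioi 0) := fun x hx =>
  (Real.continuousAt_rpow_const x c (Or.inl (ne_of_gt hx))).continuousWithinAt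

-- integrability of u^c e^{-au} φ(u) with |φ| ≤ 1
lemma aux_int_phi {c a : ℝ} (hc : -1 < c) (ha : 0 < a) {φ : ℝ → ℝ}
    (hφ : Continuous φ) (hφ1 : ∀ x, |φ x| ≤ 1) :
    IntegrableOn (fun u : ℝ => u ^ c * Real.exp (-(a * u)) * φ u) (Ioi 0) := by
  refine Integrable.mono' (aux_int hc ha) ?_ ?_
  · exact ((aux_cont.mul (Real.continuous_exp.comp (by continuity)).continuousOn).mul
      hφ.continuousOn).aestronglyMeasurable measurableSet_Ioi
  · filter_upwards [ae_restrict_mem measurableSet_Ioi] with x hx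
    rw [mem_Ioi] at hx
    have h1 : 0 ≤ x ^ c * Real.exp (-(a * x)) := by positivity
    calc ‖x ^ c * Real.exp (-(a * x)) * φ x‖ = x ^ c * Real.exp (-(a * x)) * |φ x| := by
          rw [Real.norm_eq_abs, abs_mul, abs_of_nonneg h1]
      _ ≤ x ^ c * Real.exp (-(a * x)) * 1 := by
          exact mul_le_mul_of_nonneg_left (hφ1 x) h1
      _ = x ^ c * Real.exp (-(a * x)) := mul_one _

lemma aux_int_sin {a b d : ℝ} (ha : 0 < a) (hd : -1 < d) :
    IntegrableOn (fun u : ℝ => u ^ (d - 1) * Real.exp (-(a * u)) * Real.sin (b * u)) (Ioi 0) := by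
  refine Integrable.mono' ((aux_int hd ha).const_mul |b|) ?_ ?_
  · exact ((aux_cont.mul (Real.continuous_exp.comp (by continuity)).continuousOn).mul
      (Real.continuous_sin.comp (by continuity)).continuousOn).aestronglyMeasurable
      measurableSet_Ioi
  · filter_upwards [ae_restrict_mem measurableSet_Ioi] with x hx
    rw [mem_Ioi] at hx
    have h1 : 0 ≤ x ^ (d - 1) * Real.exp (-(a * x)) := by positivity
    have hsin : |Real.sin (b * x)| ≤ |b| * x := by
      calc |Real.sin (b * x)| ≤ |b * x| := Real.abs_sin_le_abs
        _ = |b| * x := by rw [abs_mul, abs_of_nonneg hx.le]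
    calc ‖x ^ (d - 1) * Real.exp (-(a * x)) * Real.sin (b * x)‖
        = x ^ (d - 1) * Real.exp (-(a * x)) * |Real.sin (b * x)| := by
          rw [Real.norm_eq_abs, abs_mul, abs_of_nonneg h1]
      _ ≤ x ^ (d - 1) * Real.exp (-(a * x)) * (|b| * x) :=
          mul_le_mul_of_nonneg_left hsin h1
      _ = |b| * (x ^ (d - 1) * x * Real.exp (-(a * x))) := by ring
      _ = |b| * (x ^ d * Real.exp (-(a * x))) := by
          rw [← Real.rpow_add_one (ne_of_gt hx) (d - 1), sub_add_cancel]

lemma aux_meas {s : ℝ} (w : ℂ) :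
    AEStronglyMeasurable (fun t : ℝ => ((t ^ (s - 1) : ℝ) : ℂ) * Complex.exp (-(w * t)))
      (volume.restrict (Ioi 0)) :=
  ((Complex.continuous_ofReal.comp_continuousOn aux_cont).mul
    (Complex.continuous_exp.comp (by continuity)).continuousOn).aestronglyMeasurable
    measurableSet_Ioi

lemma aux_norm {s : ℝ} (w : ℂ) {t : ℝ} (ht : 0 < t) :
    ‖((t ^ (s - 1) : ℝ) : ℂ) * Complex.exp (-(w * t))‖
      = t ^ (s - 1) * Real.exp (-(w.re * t)) := by
  rw [norm_mul, Complex.norm_real, Real.norm_eq_abs,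
    abs_of_nonneg (Real.rpow_nonneg ht.le _), Complex.norm_exp]
  congr 2
  simp [Complex.mul_re]

lemma aux_intgr {s : ℝ} (hs : 0 < s) {w : ℂ} (hw : 0 < w.re) :
    IntegrableOn (fun t : ℝ => ((t ^ (s - 1) : ℝ) : ℂ) * Complex.exp (-(w * t))) (Ioi 0) := by
  refine Integrable.mono' (aux_int (by linarith : (-1:ℝ) < s - 1) hw) (aux_meas w) ?_
  filter_upwards [ae_restrict_mem measurableSet_Ioi] with t ht
  rw [mem_Ioi] at ht
  rw [aux_norm w ht]

lemma aux_meas' {s : ℝ} (w : ℂ) :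
    AEStronglyMeasurable
      (fun t : ℝ => ((t ^ (s - 1) : ℝ) : ℂ) * (Complex.exp (-(w * t)) * -(t:ℂ)))
      (volume.restrict (Ioi 0)) :=
  ((Complex.continuous_ofReal.comp_continuousOn aux_cont).mul
    (((Complex.continuous_exp.comp (by continuity)).mul
      (by continuity : Continuous fun t : ℝ => -(t:ℂ))).continuousOn)).aestronglyMeasurable
    measurableSet_Ioi

lemma aux_gammaC {s : ℝ} (hs : 0 < s) {z : ℂ} (hz : 0 < z.re) :
    ∫ t in Ioi (0:ℝ), ((t ^ (s - 1) : ℝ) : ℂ) * Complex.exp (-(z * t))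
      = Complex.Gamma s * z ^ (-(s:ℂ)) := by
  set U : Set ℂ := {w : ℂ | 0 < w.re} with hU
  have hUo : IsOpen U := isOpen_lt continuous_const Complex.continuous_re
  have hUc : Convex ℝ U := convex_halfSpace_re_gt 0
  set f : ℂ → ℂ := fun w => ∫ t in Ioi (0:ℝ), ((t ^ (s - 1) : ℝ) : ℂ) * Complex.exp (-(w * t))
    with hf
  set g : ℂ → ℂ := fun w => Complex.Gamma s * w ^ (-(s:ℂ)) with hg
  -- f is differentiable on U
  have hfd : DifferentiableOn ℂ f U := by
    intro w hw
    have hwre : 0 < w.re := hw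
    set ε := w.re / 2 with hε
    have hε0 : 0 < ε := by positivity
    have key := hasDerivAt_integral_of_dominated_loc_of_deriv_le (μ := volume.restrict (Ioi 0))
      (F := fun x (t : ℝ) => ((t ^ (s - 1) : ℝ) : ℂ) * Complex.exp (-(x * t)))
      (F' := fun x (t : ℝ) => ((t ^ (s - 1) : ℝ) : ℂ) * (Complex.exp (-(x * t)) * -(t:ℂ)))
      (x₀ := w) (bound := fun t => t ^ s * Real.exp (-(ε * t))) (Metric.ball_mem_nhds w hε0)
      (Filter.Eventually.of_forall fun x => aux_meas x) (aux_intgr hs hwre) (aux_meas' w) ?_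
      ((aux_int (by linarith : (-1:ℝ) < s) hε0)) ?_
    · exact (key.2.differentiableAt).differentiableWithinAt
    · -- bound
      filter_upwards [ae_restrict_mem measurableSet_Ioi] with t ht x hx
      rw [mem_Ioi] at ht
      have hxre : ε ≤ x.re := by
        have h1 : |(x - w).re| ≤ ‖x - w‖ := Complex.abs_re_le_norm _
        have h2 : ‖x - w‖ < ε := by rwa [Metric.mem_ball, dist_eq_norm] at hx
        have := abs_le.mp (h1.trans h2.le) |>.1
        simp only [Complex.sub_re] at this
        linarith [hε ▸ (by linarith : w.re - ε = ε)]
      calc ‖((t ^ (s - 1) : ℝ) : ℂ) * (Complex.exp (-(x * t)) * -(t:ℂ))‖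
          = t ^ (s - 1) * Real.exp (-(x.re * t)) * t := by
            rw [norm_mul, norm_mul, norm_neg, Complex.norm_real, Complex.norm_real,
              Real.norm_eq_abs, Real.norm_eq_abs, abs_of_nonneg (Real.rpow_nonneg ht.le _),
              abs_of_nonneg ht.le, Complex.norm_exp, mul_assoc]
            congr 3
            simp [Complex.mul_re]
        _ = t ^ s * Real.exp (-(x.re * t)) := by
            rw [mul_right_comm, ← Real.rpow_add_one (ne_of_gt ht) (s - 1), sub_add_cancel]
        _ ≤ t ^ s * Real.exp (-(ε * t)) := by
            apply mul_le_mul_of_nonneg_left _ (Real.rpow_nonneg ht.le _)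
            apply Real.exp_le_exp.mpr
            nlinarith
    · -- differentiability of integrand
      filter_upwards [ae_restrict_mem measurableSet_Ioi] with t ht x hx
      have h1 : HasDerivAt (fun x : ℂ => -(x * t)) (-(t:ℂ)) x := by
        exact (((hasDerivAt_id x).mul_const (t:ℂ)).neg).congr_deriv (by ring)
      exact (h1.cexp).const_mul _
  have hgd : DifferentiableOn ℂ g U := by
    intro w hw
    have hsl : w ∈ Complex.slitPlane := Complex.mem_slitPlane_iff.mpr (Or.inl hw)
    exact ((((hasDerivAt_id w).cpow_const hsl).const_mul
      (Complex.Gamma s)).differentiableAt).differentiableWithinAt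
  -- f = g on positive reals
  have key : ∀ r : ℝ, 0 < r → f (r:ℂ) = g (r:ℂ) := by
    intro r hr
    have h1 := Complex.integral_cpow_mul_exp_neg_mul_Ioi
      (a := (s:ℂ)) (r := r) (by simpa using hs) hr
    have h2 : f (r:ℂ) = ∫ t in Ioi (0:ℝ), (t:ℂ) ^ ((s:ℂ) - 1) * Complex.exp (-(r * t)) := by
      refine setIntegral_congr_fun measurableSet_Ioi fun t ht => ?_
      rw [mem_Ioi] at ht
      congr 1
      rw [Complex.ofReal_cpow ht.le]
      push_cast
      ring_nf
    rw [h2, h1, hg]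
    have hrc : ((r:ℂ)) ^ (-(s:ℂ)) = ((r ^ (-s) : ℝ) : ℂ) := by
      rw [Complex.ofReal_cpow hr.le]
      push_cast
      ring_nf
    have hrc2 : ((1 / (r:ℂ))) ^ ((s:ℂ)) = ((r ^ (-s) : ℝ) : ℂ) := by
      rw [show ((1 / (r:ℂ))) = (((1 / r : ℝ)) : ℂ) by push_cast; ring,
        ← Complex.ofReal_cpow (by positivity)]
      norm_cast
      rw [one_div, Real.inv_rpow hr.le, ← Real.rpow_neg hr.le]
    show (1 / (r:ℂ)) ^ ((s:ℂ)) * Complex.Gamma s = Complex.Gamma s * ((r:ℂ)) ^ (-(s:ℂ))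
    rw [hrc2, hrc, mul_comm]
  -- frequently equal near 1
  have hseq : Filter.Tendsto (fun n : ℕ => ((1 + ((n:ℝ)+1)⁻¹ : ℝ) : ℂ)) atTop (nhdsWithin 1 {(1:ℂ)}ᶜ) := by
    apply tendsto_nhdsWithin_of_tendsto_nhds_of_eventually_within
    · have h0 : Filter.Tendsto (fun n : ℕ => (1 + ((n:ℝ)+1)⁻¹ : ℝ)) atTop (nhds 1) := by
        have : Filter.Tendsto (fun n : ℕ => 1 / ((n:ℝ) + 1)) atTop (nhds 0) :=
          tendsto_one_div_add_atTop_nhds_zero_nat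
        simpa [one_div] using tendsto_const_nhds.add this
      have := (Complex.continuous_ofReal.tendsto (1:ℝ)).comp h0
      simpa [Function.comp_def] using this
    · filter_upwards with n
      simp only [mem_compl_iff, mem_singleton_iff]
      intro hcon
      have : (1 + ((n:ℝ)+1)⁻¹ : ℝ) = 1 := by exact_mod_cast hcon
      have hp : (0:ℝ) < ((n:ℝ)+1)⁻¹ := by positivity
      linarith
  have hfreq : ∃ᶠ w in nhdsWithin (1:ℂ) {(1:ℂ)}ᶜ, f w = g w :=
    hseq.frequently (Filter.Frequently.of_forall fun n => key _ (by positivity))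
  have heq := AnalyticOnNhd.eqOn_of_preconnected_of_frequently_eq
    (hfd.analyticOnNhd hUo) (hgd.analyticOnNhd hUo) hUc.isPreconnected
    (show (1:ℂ) ∈ U by simp [hU]) hfreq
  exact heq hz

lemma aux_sc {a b p : ℝ} (ha : 0 < a) (hp : 0 < p) :
    (∫ u in Ioi (0:ℝ), u ^ (p - 1) * Real.exp (-(a * u)) * Real.sin (b * u)
       = Real.Gamma p * ((Real.sqrt (a^2 + b^2)) ^ (-p) * Real.sin (p * Real.arctan (b / a))))
  ∧ (∫ u in Ioi (0:ℝ), u ^ (p - 1) * Real.exp (-(a * u)) * Real.cos (b * u)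
       = Real.Gamma p * ((Real.sqrt (a^2 + b^2)) ^ (-p) * Real.cos (p * Real.arctan (b / a)))) := by
  set z : ℂ := (a : ℂ) - (b : ℂ) * Complex.I with hzdef
  have hzre : z.re = a := by simp [hzdef]
  have hzim : z.im = -b := by simp [hzdef]
  have hzre0 : 0 < z.re := by rwa [hzre]
  have hint := aux_intgr hp hzre0
  have hgam := aux_gammaC hp hzre0
  set r := Real.sqrt (a^2 + b^2) with hrdef
  set θ := Real.arctan (b / a) with hθdef
  have hr0 : 0 < r := Real.sqrt_pos.mpr (by positivity)
  -- a = r cos θ, b = r sin θ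
  have hsq : Real.sqrt (1 + (b/a)^2) = r / a := by
    rw [show 1 + (b/a)^2 = (a^2 + b^2) / a^2 by field_simp,
      Real.sqrt_div (by positivity : (0:ℝ) ≤ a^2 + b^2), Real.sqrt_sq ha.le]
  have ha_eq : r * Real.cos θ = a := by
    rw [hθdef, Real.cos_arctan, hsq]; field_simp
  have hb_eq : r * Real.sin θ = b := by
    rw [hθdef, Real.sin_arctan, hsq]; field_simp
  -- arg and abs of z
  have habs : ‖z‖ = r := by
    rw [Complex.norm_def, Complex.normSq_apply, hzre, hzim, hrdef]
    congr 1; ring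
  have hθpi : -θ ∈ Set.Ioc (-π) π := by
    constructor
    · have := Real.arctan_lt_pi_div_two (b / a)
      have := Real.pi_pos
      nlinarith [Real.neg_pi_div_two_lt_arctan (b / a)]
    · have := Real.neg_pi_div_two_lt_arctan (b / a)
      have := Real.pi_pos
      nlinarith [Real.arctan_lt_pi_div_two (b / a)]
  have harg : Complex.arg z = -θ := by
    have hz_eq : z = (r : ℂ) * (Complex.cos (↑(-θ)) + Complex.sin (↑(-θ)) * Complex.I) := by
      apply Complex.ext
      · simp only [Complex.mul_re, Complex.ofReal_re, Complex.ofReal_im, Complex.add_re,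
          Complex.mul_im, Complex.add_im, Complex.I_re, Complex.I_im, ← Complex.ofReal_cos,
          ← Complex.ofReal_sin]
        simp only [Complex.ofReal_re, Complex.ofReal_im, hzre]
        rw [Real.cos_neg]
        ring_nf
        nlinarith [ha_eq]
      · simp only [Complex.mul_re, Complex.ofReal_re, Complex.ofReal_im, Complex.add_re,
          Complex.mul_im, Complex.add_im, Complex.I_re, Complex.I_im, ← Complex.ofReal_cos,
          ← Complex.ofReal_sin]
        simp only [Complex.ofReal_re, Complex.ofReal_im, hzim]
        rw [Real.sin_neg]
        ring_nf
        nlinarith [hb_eq]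
    rw [hz_eq, Complex.arg_real_mul _ hr0, Complex.arg_cos_add_sin_mul_I hθpi]
  have hz0 : z ≠ 0 := by
    intro h
    rw [h] at hzre
    simp at hzre
    linarith [hzre ▸ ha]
  -- re and im of z ^ (-p)
  have hre : (z ^ (-(p:ℂ))).re = r ^ (-p) * Real.cos (p * θ) := by
    rw [Complex.cpow_def_of_ne_zero hz0]
    rw [Complex.exp_re]
    have h1 : (Complex.log z * -(p:ℂ)).re = Real.log r * -p := by
      simp [Complex.mul_re, Complex.log_re, Complex.log_im, habs]
    have h2 : (Complex.log z * -(p:ℂ)).im = p * θ := by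
      simp [Complex.mul_im, Complex.log_re, Complex.log_im, harg]
      ring
    rw [h1, h2, ← Real.rpow_def_of_pos hr0]
  have him : (z ^ (-(p:ℂ))).im = r ^ (-p) * Real.sin (p * θ) := by
    rw [Complex.cpow_def_of_ne_zero hz0]
    rw [Complex.exp_im]
    have h1 : (Complex.log z * -(p:ℂ)).re = Real.log r * -p := by
      simp [Complex.mul_re, Complex.log_re, Complex.log_im, habs]
    have h2 : (Complex.log z * -(p:ℂ)).im = p * θ := by
      simp [Complex.mul_im, Complex.log_re, Complex.log_im, harg]
      ring
    rw [h1, h2, ← Real.rpow_def_of_pos hr0]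
  -- integrand re and im
  have hind_im : ∀ t ∈ Ioi (0:ℝ),
      (((t ^ (p - 1) : ℝ) : ℂ) * Complex.exp (-(z * t))).im
        = t ^ (p - 1) * Real.exp (-(a * t)) * Real.sin (b * t) := by
    intro t ht
    rw [Complex.im_ofReal_mul, Complex.exp_im]
    have h1 : (-(z * t)).re = -(a * t) := by simp [Complex.mul_re, hzre, hzim]
    have h2 : (-(z * t)).im = b * t := by simp [Complex.mul_im, hzre, hzim]
    rw [h1, h2, mul_assoc]
  have hind_re : ∀ t ∈ Ioi (0:ℝ),
      (((t ^ (p - 1) : ℝ) : ℂ) * Complex.exp (-(z * t))).re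
        = t ^ (p - 1) * Real.exp (-(a * t)) * Real.cos (b * t) := by
    intro t ht
    rw [Complex.re_ofReal_mul, Complex.exp_re]
    have h1 : (-(z * t)).re = -(a * t) := by simp [Complex.mul_re, hzre, hzim]
    have h2 : (-(z * t)).im = b * t := by simp [Complex.mul_im, hzre, hzim]
    rw [h1, h2, mul_assoc]
  have hgamre : (Complex.Gamma (p:ℂ) * z ^ (-(p:ℂ))).re
      = Real.Gamma p * (r ^ (-p) * Real.cos (p * θ)) := by
    rw [Complex.Gamma_ofReal, Complex.re_ofReal_mul, hre]
  have hgamim : (Complex.Gamma (p:ℂ) * z ^ (-(p:ℂ))).im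
      = Real.Gamma p * (r ^ (-p) * Real.sin (p * θ)) := by
    rw [Complex.Gamma_ofReal, Complex.im_ofReal_mul, him]
  constructor
  · calc ∫ u in Ioi (0:ℝ), u ^ (p - 1) * Real.exp (-(a * u)) * Real.sin (b * u)
        = ∫ u in Ioi (0:ℝ), (((u ^ (p - 1) : ℝ) : ℂ) * Complex.exp (-(z * u))).im :=
          (setIntegral_congr_fun measurableSet_Ioi fun t ht => (hind_im t ht).symm)
      _ = (∫ u in Ioi (0:ℝ), ((u ^ (p - 1) : ℝ) : ℂ) * Complex.exp (-(z * u))).im :=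
          Complex.imCLM.integral_comp_comm hint
      _ = Real.Gamma p * (r ^ (-p) * Real.sin (p * θ)) := by rw [hgam, hgamim]
  · calc ∫ u in Ioi (0:ℝ), u ^ (p - 1) * Real.exp (-(a * u)) * Real.cos (b * u)
        = ∫ u in Ioi (0:ℝ), (((u ^ (p - 1) : ℝ) : ℂ) * Complex.exp (-(z * u))).re :=
          (setIntegral_congr_fun measurableSet_Ioi fun t ht => (hind_re t ht).symm)
      _ = (∫ u in Ioi (0:ℝ), ((u ^ (p - 1) : ℝ) : ℂ) * Complex.exp (-(z * u))).re :=
          Complex.reCLM.integral_comp_comm hint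
      _ = Real.Gamma p * (r ^ (-p) * Real.cos (p * θ)) := by rw [hgam, hgamre]

set_option maxHeartbeats 1000000 in
theorem stmt_4 (a b d : ℝ) (ha : 0 < a) (hd : -1 < d) (hd0 : d ≠ 0) :
    ∫ u in Set.Ioi (0:ℝ), u ^ (d - 1) * Real.exp (-(a * u)) * Real.sin (b * u)
      = Real.Gamma d * (a ^ 2 + b ^ 2) ^ (-(d / 2)) * Real.sin (d * Real.arctan (b / a)) := by
  have hp : 0 < d + 1 := by linarith
  set θ := Real.arctan (b / a) with hθ
  set r := Real.sqrt (a ^ 2 + b ^ 2) with hr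
  have hr0 : 0 < r := Real.sqrt_pos.mpr (by positivity)
  obtain ⟨hS, hC⟩ := aux_sc (b := b) ha hp
  simp only [add_sub_cancel_right] at hS hC
  set F := ∫ u in Ioi (0:ℝ), u ^ (d - 1) * Real.exp (-(a * u)) * Real.sin (b * u) with hF
  set S := ∫ u in Ioi (0:ℝ), u ^ d * Real.exp (-(a * u)) * Real.sin (b * u) with hSdef
  set C := ∫ u in Ioi (0:ℝ), u ^ d * Real.exp (-(a * u)) * Real.cos (b * u) with hCdef
  -- a = r cos θ, b = r sin θ
  have hsq : Real.sqrt (1 + (b / a) ^ 2) = r / a := by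
    rw [show 1 + (b / a) ^ 2 = (a ^ 2 + b ^ 2) / a ^ 2 by field_simp,
      Real.sqrt_div (by positivity : (0:ℝ) ≤ a ^ 2 + b ^ 2), Real.sqrt_sq ha.le]
  have ha_eq : r * Real.cos θ = a := by
    rw [hθ, Real.cos_arctan, hsq]; field_simp
  have hb_eq : r * Real.sin θ = b := by
    rw [hθ, Real.sin_arctan, hsq]; field_simp
  -- integration by parts via FTC on (0, ∞)
  set H : ℝ → ℝ := fun u => u ^ d * Real.exp (-(a * u)) * Real.sin (b * u) with hH
  set H' : ℝ → ℝ := fun u =>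
    (d * u ^ (d - 1) * Real.exp (-(a * u)) + u ^ d * (Real.exp (-(a * u)) * -a))
        * Real.sin (b * u)
      + u ^ d * Real.exp (-(a * u)) * (Real.cos (b * u) * b) with hH'
  have hderiv : ∀ u ∈ Ioi (0:ℝ), HasDerivAt H (H' u) u := by
    intro u hu
    rw [mem_Ioi] at hu
    have h1 : HasDerivAt (fun u : ℝ => u ^ d) (d * u ^ (d - 1)) u :=
      Real.hasDerivAt_rpow_const (Or.inl (ne_of_gt hu))
    have h2 : HasDerivAt (fun u : ℝ => Real.exp (-(a * u))) (Real.exp (-(a * u)) * -a) u := by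
      have h : HasDerivAt (fun u : ℝ => -(a * u)) (-a) u := by
        exact (((hasDerivAt_id u).const_mul a).neg).congr_deriv (by ring)
      exact h.exp
    have h3 : HasDerivAt (fun u : ℝ => Real.sin (b * u)) (Real.cos (b * u) * b) u := by
      have h : HasDerivAt (fun u : ℝ => b * u) b u := by
        simpa using (hasDerivAt_id u).const_mul b
      exact h.sin
    exact (h1.mul h2).mul h3
  have hH0 : H 0 = 0 := by simp [hH]
  have hcont : ContinuousWithinAt H (Ici 0) 0 := by
    unfold ContinuousWithinAt
    rw [hH0]
    apply squeeze_zero_norm' (a := fun u : ℝ => |b| * u ^ (d + 1))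
    · filter_upwards [self_mem_nhdsWithin] with u hu
      rw [mem_Ici] at hu
      rcases eq_or_lt_of_le hu with h | h
      · rw [← h]
        simp [hH, Real.zero_rpow (by linarith : d + 1 ≠ 0)]
      · have h1 : 0 ≤ u ^ d * Real.exp (-(a * u)) := by positivity
        have hexp : Real.exp (-(a * u)) ≤ 1 := by
          rw [Real.exp_le_one_iff]; nlinarith
        calc ‖H u‖ = u ^ d * Real.exp (-(a * u)) * |Real.sin (b * u)| := by
              rw [hH, Real.norm_eq_abs, abs_mul, abs_of_nonneg h1]
          _ ≤ u ^ d * Real.exp (-(a * u)) * (|b| * u) := by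
              apply mul_le_mul_of_nonneg_left _ h1
              calc |Real.sin (b * u)| ≤ |b * u| := Real.abs_sin_le_abs
                _ = |b| * u := by rw [abs_mul, abs_of_nonneg h.le]
          _ ≤ u ^ d * 1 * (|b| * u) := by
              apply mul_le_mul_of_nonneg_right _ (by positivity)
              exact mul_le_mul_of_nonneg_left hexp (by positivity)
          _ = |b| * (u ^ d * u) := by ring
          _ = |b| * u ^ (d + 1) := by
              rw [← Real.rpow_add_one (ne_of_gt h) d]
    · have hcw : ContinuousWithinAt (fun u : ℝ => |b| * u ^ (d + 1)) (Ici 0) 0 :=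
        continuousWithinAt_const.mul
          ((Real.continuousAt_rpow_const 0 (d + 1) (Or.inr hp.le)).continuousWithinAt)
      have h2 := hcw.tendsto
      rw [Real.zero_rpow (by linarith : d + 1 ≠ 0), mul_zero] at h2
      exact h2
  have htop : Filter.Tendsto H atTop (nhds 0) := by
    apply squeeze_zero_norm' (a := fun u : ℝ => u ^ d * Real.exp (-a * u))
    · filter_upwards [Filter.eventually_gt_atTop 0] with u hu
      have h1 : 0 ≤ u ^ d * Real.exp (-(a * u)) := by positivity
      calc ‖H u‖ = u ^ d * Real.exp (-(a * u)) * |Real.sin (b * u)| := by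
            rw [hH, Real.norm_eq_abs, abs_mul, abs_of_nonneg h1]
        _ ≤ u ^ d * Real.exp (-(a * u)) * 1 :=
            mul_le_mul_of_nonneg_left (abs_le.mpr ⟨Real.neg_one_le_sin _, Real.sin_le_one _⟩) h1
        _ = u ^ d * Real.exp (-a * u) := by rw [mul_one, neg_mul]
    · exact tendsto_rpow_mul_exp_neg_mul_atTop_nhds_zero d a ha
  have hint1 := aux_int_sin ha hd (b := b)
  have hint2 := aux_int_phi (a := a) hd ha (φ := fun u => Real.sin (b * u))
    (Real.continuous_sin.comp (continuous_const.mul continuous_id))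
    (fun x => abs_le.mpr ⟨Real.neg_one_le_sin _, Real.sin_le_one _⟩)
  have hint3 := aux_int_phi (a := a) hd ha (φ := fun u => Real.cos (b * u))
    (Real.continuous_cos.comp (continuous_const.mul continuous_id))
    (fun x => abs_le.mpr ⟨Real.neg_one_le_cos _, Real.cos_le_one _⟩)
  beta_reduce at hint2 hint3
  have hH'eq : H' = fun u =>
      d * (u ^ (d - 1) * Real.exp (-(a * u)) * Real.sin (b * u))
        + ((-a) * (u ^ d * Real.exp (-(a * u)) * Real.sin (b * u))
          + b * (u ^ d * Real.exp (-(a * u)) * Real.cos (b * u))) := by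
    funext u; rw [hH']; ring
  have hint' : IntegrableOn H' (Ioi 0) := by
    rw [hH'eq]
    exact (hint1.const_mul d).add ((hint2.const_mul (-a)).add (hint3.const_mul b))
  have hzero := integral_Ioi_of_hasDerivAt_of_tendsto hcont hderiv hint' htop
  rw [hH0, sub_zero] at hzero
  have hsplit : ∫ u in Ioi (0:ℝ), H' u = d * F + ((-a) * S + b * C) := by
    rw [hH'eq]
    have i1 : IntegrableOn (fun u : ℝ =>
        d * (u ^ (d - 1) * Real.exp (-(a * u)) * Real.sin (b * u))) (Ioi 0) :=
      hint1.const_mul d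
    have i2 : IntegrableOn (fun u : ℝ =>
        (-a) * (u ^ d * Real.exp (-(a * u)) * Real.sin (b * u))) (Ioi 0) :=
      hint2.const_mul (-a)
    have i3 : IntegrableOn (fun u : ℝ =>
        b * (u ^ d * Real.exp (-(a * u)) * Real.cos (b * u))) (Ioi 0) :=
      hint3.const_mul b
    have i23 : IntegrableOn (fun u : ℝ =>
        (-a) * (u ^ d * Real.exp (-(a * u)) * Real.sin (b * u))
          + b * (u ^ d * Real.exp (-(a * u)) * Real.cos (b * u))) (Ioi 0) := i2.add i3
    rw [integral_add i1 i23, integral_add i2 i3,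
      MeasureTheory.integral_const_mul, MeasureTheory.integral_const_mul, MeasureTheory.integral_const_mul]
  have hdF : d * F = a * S - b * C := by
    rw [hsplit] at hzero; linarith
  have hFval : F = (a * S - b * C) / d := by
    rw [eq_div_iff hd0]; linarith
  rw [hFval, hS, hC, Real.Gamma_add_one hd0]
  have hsin : a * Real.sin ((d + 1) * θ) - b * Real.cos ((d + 1) * θ)
      = r * Real.sin (d * θ) := by
    rw [← ha_eq, ← hb_eq, show d * θ = (d + 1) * θ - θ by ring, Real.sin_sub]
    ring
  have hrpow : r ^ (-(d + 1)) * r = (a ^ 2 + b ^ 2) ^ (-(d / 2)) := by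
    rw [← Real.rpow_add_one (ne_of_gt hr0) (-(d + 1)),
      show (-(d + 1) + 1 : ℝ) = -d by ring, hr, Real.sqrt_eq_rpow,
      ← Real.rpow_mul (by positivity : (0:ℝ) ≤ a ^ 2 + b ^ 2),
      show ((1 / (2:ℝ)) * (-d) : ℝ) = -(d / 2) by ring]
  calc (a * (d * Real.Gamma d * (r ^ (-(d + 1)) * Real.sin ((d + 1) * θ)))
        - b * (d * Real.Gamma d * (r ^ (-(d + 1)) * Real.cos ((d + 1) * θ)))) / d
      = (d * Real.Gamma d * (r ^ (-(d + 1))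
          * (a * Real.sin ((d + 1) * θ) - b * Real.cos ((d + 1) * θ)))) / d := by ring
    _ = (d * Real.Gamma d * (r ^ (-(d + 1)) * (r * Real.sin (d * θ)))) / d := by rw [hsin]
    _ = Real.Gamma d * ((r ^ (-(d + 1)) * r) * Real.sin (d * θ)) := by
        field_simp
    _ = Real.Gamma d * (a ^ 2 + b ^ 2) ^ (-(d / 2)) * Real.sin (d * θ) := by
        rw [hrpow]; ring
end

section
/- For 0 < α < 2, α ≠ 1, -1 ≤ β ≤ 1, let θ₀ = α^{-1} arctan(β tan(πα/2)) and d > 0. Then ∫_0^∞ cos(β tan(πα/2) r^α) r^{d-1} e^{-r^α} dr = (cos αθ₀)^{d/α} cos(dθ₀) Γ(1 + d/α)/d. -/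
open Real MeasureTheory Set Filter

noncomputable section

set_option maxHeartbeats 1000000

namespace Stmt9Aux

open Complex

lemma integrable_aux {p : ℝ} {c : ℂ} (hp : -1 < p) (hc : 0 < c.re) :
    IntegrableOn (fun t : ℝ => (↑(t ^ p) : ℂ) * Complex.exp (-(c * t))) (Ioi 0) := by
  have hbound : IntegrableOn (fun t : ℝ => t ^ p * Real.exp (-c.re * t)) (Ioi 0) := by
    simpa [Real.rpow_one] using integrableOn_rpow_mul_exp_neg_mul_rpow hp one_pos hc
  have hcont : ContinuousOn (fun t : ℝ => (↑(t ^ p) : ℂ) * Complex.exp (-(c * t))) (Ioi 0) := by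
    apply ContinuousOn.mul
    · exact Complex.continuous_ofReal.comp_continuousOn
        (continuousOn_id.rpow_const (fun x hx => Or.inl (ne_of_gt hx)))
    · exact (Complex.continuous_exp.comp
        ((continuous_const.mul Complex.continuous_ofReal).neg)).continuousOn
  refine hbound.mono' (hcont.aestronglyMeasurable measurableSet_Ioi) ?_
  filter_upwards [ae_restrict_mem measurableSet_Ioi] with t ht
  have ht' : (0:ℝ) < t := ht
  rw [norm_mul, Complex.norm_real, Real.norm_eq_abs,
    Complex.norm_exp]
  have : (-(c * ↑t)).re = -c.re * t := by simp
  rw [this, _root_.abs_of_nonneg (Real.rpow_nonneg ht'.le p)]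

lemma ibp {p : ℝ} {c : ℂ} (hp : 0 < p) (hc : 0 < c.re) :
    c * ∫ t in Ioi (0:ℝ), (↑(t ^ p) : ℂ) * Complex.exp (-(c * t))
      = p * ∫ t in Ioi (0:ℝ), (↑(t ^ (p-1)) : ℂ) * Complex.exp (-(c * t)) := by
  have h1 := integrable_aux (by linarith : (-1:ℝ) < p) hc
  have h2 := integrable_aux (by linarith : (-1:ℝ) < p - 1) hc
  set φ : ℝ → ℂ := fun t => (↑(t ^ p) : ℂ) * Complex.exp (-(c * t)) with hφ
  set ψ : ℝ → ℂ := fun t => (p:ℂ) * ((↑(t ^ (p-1)) : ℂ) * Complex.exp (-(c * t)))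
      - c * ((↑(t ^ p) : ℂ) * Complex.exp (-(c * t))) with hψ
  have hexp : ∀ t : ℝ, HasDerivAt (fun t : ℝ => Complex.exp (-(c * t)))
      (Complex.exp (-(c * t)) * (-c)) t := by
    intro t
    have h0 : HasDerivAt (fun t : ℝ => -(c * (t:ℂ))) (-c) t := by
      simpa using (((hasDerivAt_id t).ofReal_comp).const_mul c).fun_neg
    exact h0.cexp
  have hderiv : ∀ t ∈ Ioi (0:ℝ), HasDerivAt φ (ψ t) t := by
    intro t ht
    have hA : HasDerivAt (fun t : ℝ => ((t ^ p : ℝ) : ℂ)) (↑(p * t ^ (p-1))) t :=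
      (Real.hasDerivAt_rpow_const (Or.inl (ne_of_gt ht))).ofReal_comp
    have := hA.fun_mul (hexp t)
    rw [hψ]
    refine this.congr_deriv ?_
    push_cast
    ring
  have hcont : ContinuousWithinAt φ (Ici (0:ℝ)) 0 := by
    apply ContinuousAt.continuousWithinAt
    apply ContinuousAt.mul
    · exact Complex.continuous_ofReal.continuousAt.comp
        (Real.continuousAt_rpow_const 0 p (Or.inr hp.le))
    · exact (Complex.continuous_exp.comp
        ((continuous_const.mul Complex.continuous_ofReal).neg)).continuousAt
  have htend : Tendsto φ atTop (nhds 0) := by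
    apply squeeze_zero_norm' (a := fun t : ℝ => t ^ p * Real.exp (-c.re * t))
    · filter_upwards [eventually_gt_atTop (0:ℝ)] with t ht
      rw [hφ]
      simp only [norm_mul, Complex.norm_real, Real.norm_eq_abs, Complex.norm_exp]
      have : (-(c * ↑t)).re = -c.re * t := by simp
      rw [this, _root_.abs_of_nonneg (Real.rpow_nonneg ht.le p)]
    · exact tendsto_rpow_mul_exp_neg_mul_atTop_nhds_zero p c.re hc
  have hψint : IntegrableOn ψ (Ioi 0) := (h2.const_mul _).sub (h1.const_mul _)
  have h0 : ∫ t in Ioi (0:ℝ), ψ t = 0 - φ 0 := by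
    exact integral_Ioi_of_hasDerivAt_of_tendsto hcont hderiv hψint htend
  have hφ0 : φ 0 = 0 := by
    rw [hφ]; simp [Real.zero_rpow hp.ne']
  rw [hφ0, sub_zero] at h0
  have := integral_sub (h2.const_mul (p:ℂ)) (h1.const_mul c)
  rw [integral_const_mul, integral_const_mul] at this
  have h0' : (p:ℂ) * (∫ t in Ioi (0:ℝ), (↑(t ^ (p-1)) : ℂ) * Complex.exp (-(c * t)))
      - c * ∫ t in Ioi (0:ℝ), φ t = 0 := by rw [← this]; exact h0
  linear_combination -h0'

lemma re_aux (b : ℝ) : ((1:ℂ) - b * I).re = 1 := by simp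

lemma ne_aux (b : ℝ) : (1:ℂ) - b * I ≠ 0 := by
  intro h
  have := congrArg Complex.re h
  simp at this

lemma integrable_aux' {p : ℝ} (hp : -1 < p) (b : ℝ) :
    IntegrableOn (fun t : ℝ => (↑(t ^ p) : ℂ) * Complex.exp (-((1 - b * I) * t))) (Ioi 0) :=
  integrable_aux hp (by simp)

lemma ibp' {p : ℝ} (hp : 0 < p) (b : ℝ) :
    ((1:ℂ) - b * I) * ∫ t in Ioi (0:ℝ), (↑(t ^ p) : ℂ) * Complex.exp (-((1 - b * I) * t))
      = p * ∫ t in Ioi (0:ℝ), (↑(t ^ (p-1)) : ℂ) * Complex.exp (-((1 - b * I) * t)) :=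
  ibp hp (by simp)

lemma key {s : ℝ} (hs : 0 < s) (b : ℝ) :
    ∫ t in Ioi (0:ℝ), (↑(t ^ (s-1)) : ℂ) * Complex.exp (-((1 - b * I) * t))
      = ↑(Real.Gamma s) * ((1:ℂ) - b * I) ^ (-s : ℂ) := by
  set J : ℝ → ℂ := fun b => ∫ t in Ioi (0:ℝ),
      (↑(t ^ (s-1)) : ℂ) * Complex.exp (-((1 - b * I) * t)) with hJ
  have hre : ∀ b : ℝ, (0:ℝ) < ((1:ℂ) - b * I).re := fun b => by simp
  -- derivative of J
  have hJd : ∀ b : ℝ, HasDerivAt J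
      (I * ((s:ℂ) / (1 - b * I)) * J b) b := by
    intro b₀
    have main : HasDerivAt J
        (∫ t in Ioi (0:ℝ), I * (t:ℂ) * ((↑(t ^ (s-1)) : ℂ)
          * Complex.exp (-((1 - b₀ * I) * t)))) b₀ := by
      have hF_meas : ∀ᶠ x : ℝ in nhds b₀, AEStronglyMeasurable
          (fun t : ℝ => (↑(t ^ (s-1)) : ℂ) * Complex.exp (-((1 - x * I) * t)))
          (volume.restrict (Ioi 0)) := by
        filter_upwards with x
        exact (integrable_aux' (by linarith) x).aestronglyMeasurable
      have hF_int := integrable_aux' (by linarith : (-1:ℝ) < s - 1) b₀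
      have hbound_int : IntegrableOn (fun t : ℝ => t ^ s * Real.exp (-t)) (Ioi 0) := by
        simpa [Real.rpow_one] using
          integrableOn_rpow_mul_exp_neg_mul_rpow (by linarith : (-1:ℝ) < s) one_pos one_pos
      have hF'_meas : AEStronglyMeasurable
          (fun t : ℝ => I * (t:ℂ) * ((↑(t ^ (s-1)) : ℂ) * Complex.exp (-((1 - b₀ * I) * t))))
          (volume.restrict (Ioi 0)) :=
        ((continuous_const.mul Complex.continuous_ofReal).aestronglyMeasurable.restrict).mul
          (integrable_aux' (by linarith) b₀).aestronglyMeasurable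
      have h_bound : ∀ᵐ t : ℝ ∂(volume.restrict (Ioi (0:ℝ))), ∀ x ∈ Metric.ball b₀ (1:ℝ),
          ‖I * (t:ℂ) * ((↑(t ^ (s-1)) : ℂ) * Complex.exp (-((1 - x * I) * t)))‖
            ≤ t ^ s * Real.exp (-t) := by
        filter_upwards [ae_restrict_mem measurableSet_Ioi] with t ht x _
        have ht' : (0:ℝ) < t := ht
        have hren : (-((1 - (x:ℂ) * I) * t)).re = -t := by simp
        rw [norm_mul, norm_mul, norm_mul, Complex.norm_I, Complex.norm_real, Real.norm_eq_abs,
          Complex.norm_real, Real.norm_eq_abs, Complex.norm_exp, hren, one_mul,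
          _root_.abs_of_nonneg ht'.le, _root_.abs_of_nonneg (Real.rpow_nonneg ht'.le _)]
        rw [← mul_assoc]
        have : t * t ^ (s - 1) = t ^ s := by
          rw [← Real.rpow_one_add' ht'.le (by linarith)]
          norm_num
        rw [this]
      have h_diff : ∀ᵐ t : ℝ ∂(volume.restrict (Ioi (0:ℝ))), ∀ x ∈ Metric.ball b₀ (1:ℝ),
          HasDerivAt (fun x : ℝ => (↑(t ^ (s-1)) : ℂ) * Complex.exp (-((1 - x * I) * t)))
            (I * (t:ℂ) * ((↑(t ^ (s-1)) : ℂ) * Complex.exp (-((1 - x * I) * t)))) x := by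
        filter_upwards [ae_restrict_mem measurableSet_Ioi] with t ht x _
        have h1 : HasDerivAt (fun x : ℝ => -((1 - (x:ℂ) * I) * t)) (I * t) x := by
          have : HasDerivAt (fun x : ℝ => ((1:ℂ) - x * I)) (-I) x := by
            simpa using (((hasDerivAt_id x).ofReal_comp).mul_const I).const_sub 1
          simpa using (this.mul_const (t:ℂ)).fun_neg
        have := (h1.cexp).const_mul (↑(t ^ (s-1)) : ℂ)
        refine this.congr_deriv ?_
        ring
      have := hasDerivAt_integral_of_dominated_loc_of_deriv_le
        (F := fun (x : ℝ) (t : ℝ) => (↑(t ^ (s-1)) : ℂ) * Complex.exp (-((1 - x * I) * t)))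
        (F' := fun (x : ℝ) (t : ℝ) => I * (t:ℂ)
          * ((↑(t ^ (s-1)) : ℂ) * Complex.exp (-((1 - x * I) * t))))
        (bound := fun t : ℝ => t ^ s * Real.exp (-t))
        (Metric.ball_mem_nhds b₀ one_pos) hF_meas (integrable_aux' (by linarith) b₀) hF'_meas h_bound hbound_int h_diff
      exact this.2
    -- rewrite the integral
    have heq : (∫ t in Ioi (0:ℝ), I * (t:ℂ) * ((↑(t ^ (s-1)) : ℂ)
          * Complex.exp (-((1 - b₀ * I) * t))))
        = I * ∫ t in Ioi (0:ℝ), (↑(t ^ s) : ℂ) * Complex.exp (-((1 - b₀ * I) * t)) := by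
      rw [← integral_const_mul]
      apply setIntegral_congr_fun measurableSet_Ioi
      intro t ht
      have ht' : (0:ℝ) < t := ht
      have : (t:ℂ) * (↑(t ^ (s-1)) : ℂ) = (↑(t ^ s) : ℂ) := by
        rw [← Complex.ofReal_mul]
        congr 1
        rw [← Real.rpow_one_add' ht'.le (by linarith)]
        norm_num
      calc I * (t:ℂ) * ((↑(t ^ (s-1)) : ℂ) * Complex.exp (-((1 - b₀ * I) * t)))
          = I * (((t:ℂ) * ↑(t ^ (s-1))) * Complex.exp (-((1 - b₀ * I) * t))) := by ring
        _ = I * ((↑(t ^ s) : ℂ) * Complex.exp (-((1 - b₀ * I) * t))) := by rw [this]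
    have hibp := ibp' hs b₀
    have hmain2 : (∫ t in Ioi (0:ℝ), (↑(t ^ s) : ℂ) * Complex.exp (-((1 - b₀ * I) * t)))
        = (s:ℂ) / (1 - b₀ * I) * J b₀ := by
      have hne := ne_aux b₀
      field_simp
      linear_combination hibp
    rw [heq, hmain2] at main
    convert main using 1
    ring
  -- the product is constant
  have hNd : ∀ b : ℝ, HasDerivAt (fun x : ℝ => ((1:ℂ) - x * I) ^ (s:ℂ) * J x) 0 b := by
    intro b
    have h1 : HasDerivAt (fun x : ℝ => ((1:ℂ) - x * I)) (-I) b := by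
      simpa using (((hasDerivAt_id b).ofReal_comp).mul_const I).const_sub 1
    have hslit : ((1:ℂ) - b * I) ∈ Complex.slitPlane :=
      Complex.mem_slitPlane_iff.mpr (Or.inl (hre b))
    have h2 : HasDerivAt (fun x : ℝ => ((1:ℂ) - x * I) ^ (s:ℂ))
        (((s:ℂ) * ((1:ℂ) - b * I) ^ ((s:ℂ) - 1)) * (-I)) b := by
      have := HasDerivAt.scomp (𝕜 := ℝ) (𝕜' := ℂ) b
        (Complex.hasStrictDerivAt_cpow_const (c := (s:ℂ)) hslit).hasDerivAt h1
      refine this.congr_deriv ?_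
      simp [smul_eq_mul]
      ring
    have := h2.fun_mul (hJd b)
    refine this.congr_deriv ?_
    have hne := ne_aux b
    have hsub : ((1:ℂ) - b * I) ^ ((s:ℂ) - 1)
        = ((1:ℂ) - b * I) ^ (s:ℂ) / ((1:ℂ) - b * I) := by
      rw [Complex.cpow_sub _ _ hne, Complex.cpow_one]
    rw [hsub]
    field_simp
    ring
  have hconst : ((1:ℂ) - b * I) ^ (s:ℂ) * J b = ((1:ℂ) - (0:ℝ) * I) ^ (s:ℂ) * J 0 :=
    is_const_of_deriv_eq_zero (fun x => (hNd x).differentiableAt)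
      (fun x => (hNd x).deriv) b 0
  have hJ0 : J 0 = ↑(Real.Gamma s) := by
    rw [hJ]
    simp only [Complex.ofReal_zero, zero_mul, sub_zero, one_mul]
    rw [Real.Gamma_eq_integral hs]
    refine (setIntegral_congr_fun measurableSet_Ioi (fun t ht => ?_)).trans
      _root_.integral_ofReal
    push_cast [← Complex.ofReal_exp]
    rw [← Complex.ofReal_neg, ← Complex.ofReal_exp]
    exact mul_comm _ _
  have hN0 : ((1:ℂ) - b * I) ^ (s:ℂ) * J b = ↑(Real.Gamma s) := by
    rw [hconst, hJ0]
    norm_num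
  -- conclude
  have hne := ne_aux b
  have hpow : ((1:ℂ) - b * I) ^ (-s : ℂ) * ((1:ℂ) - b * I) ^ (s:ℂ) = 1 := by
    rw [← Complex.cpow_add _ _ hne]
    norm_num
  calc J b = (((1:ℂ) - b * I) ^ (-s : ℂ) * ((1:ℂ) - b * I) ^ (s:ℂ)) * J b := by
        rw [hpow, one_mul]
    _ = ((1:ℂ) - b * I) ^ (-s : ℂ) * (((1:ℂ) - b * I) ^ (s:ℂ) * J b) := by ring
    _ = ↑(Real.Gamma s) * ((1:ℂ) - b * I) ^ (-s : ℂ) := by rw [hN0]; ring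

lemma abs_aux (b : ℝ) : ‖(1:ℂ) - b * I‖ = Real.sqrt (1 + b^2) := by
  rw [Complex.norm_def]
  congr 1
  simp [Complex.normSq_apply]
  ring

lemma arg_aux (b : ℝ) : Complex.arg ((1:ℂ) - b * I) = -Real.arctan b := by
  have hb2 : (0:ℝ) < 1 + b^2 := by positivity
  have hsq : 0 < Real.sqrt (1 + b^2) := Real.sqrt_pos.mpr hb2
  have h1 : (1:ℂ) - b * I
      = ↑(Real.sqrt (1 + b^2)) * (↑(Real.cos (-Real.arctan b))
        + ↑(Real.sin (-Real.arctan b)) * I) := by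
    have hc : ((Real.sqrt (1 + b^2) : ℝ) : ℂ) ≠ 0 := by exact_mod_cast hsq.ne'
    rw [Real.cos_neg, Real.sin_neg, Real.cos_arctan, Real.sin_arctan]
    push_cast
    field_simp
    ring
  rw [h1, Complex.arg_real_mul _ hsq, Complex.ofReal_cos, Complex.ofReal_sin,
    Complex.arg_cos_add_sin_mul_I]
  constructor
  · have h := Real.arctan_lt_pi_div_two b
    have := Real.pi_pos
    linarith
  · have h := Real.neg_pi_div_two_lt_arctan b
    have := Real.pi_pos
    linarith

lemma cpow_eval (s b : ℝ) :
    ((1:ℂ) - b * I) ^ (-s : ℂ)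
      = ↑(((1 + b^2) ^ (-(s/2)) : ℝ)) * Complex.exp (↑(s * Real.arctan b) * I) := by
  have hb2 : (0:ℝ) < 1 + b^2 := by positivity
  rw [Complex.cpow_def_of_ne_zero (ne_aux b)]
  rw [Complex.log, abs_aux b, arg_aux b]
  have : (↑(Real.log (Real.sqrt (1 + b^2))) + ↑(-Real.arctan b) * I) * (-s : ℂ)
      = ↑(-s * Real.log (Real.sqrt (1 + b^2))) + ↑(s * Real.arctan b) * I := by
    push_cast
    ring
  rw [this, Complex.exp_add, ← Complex.ofReal_exp]
  congr 2
  rw [Real.log_sqrt hb2.le, Real.rpow_def_of_pos hb2]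
  congr 1
  ring

lemma re_eval (r θ : ℝ) : ((r:ℂ) * Complex.exp (↑θ * I)).re = r * Real.cos θ := by
  simp [Complex.exp_mul_I, Complex.mul_re, Complex.add_re, Complex.mul_im,
    Complex.cos_ofReal_re, Complex.sin_ofReal_re, Complex.cos_ofReal_im,
    Complex.sin_ofReal_im]

/-- The real integral. -/
lemma real_key {s : ℝ} (hs : 0 < s) (b : ℝ) :
    ∫ t in Ioi (0:ℝ), Real.cos (b * t) * t ^ (s - 1) * Real.exp (-t)
      = Real.Gamma s * ((1 + b^2) ^ (-(s/2)) * Real.cos (s * Real.arctan b)) := by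
  have hint := integrable_aux' (by linarith : (-1:ℝ) < s - 1) b
  have h := key hs b
  have hre : (∫ t in Ioi (0:ℝ),
      ((↑(t ^ (s-1)) : ℂ) * Complex.exp (-((1 - b * I) * t))).re)
      = ((↑(Real.Gamma s) : ℂ) * ((1:ℂ) - b * I) ^ (-s : ℂ)).re := by
    have h2 := integral_re hint
    simp only [RCLike.re_to_complex] at h2
    rw [h2, h]
  have hleft : (∫ t in Ioi (0:ℝ),
        ((↑(t ^ (s-1)) : ℂ) * Complex.exp (-((1 - b * I) * t))).re)
      = ∫ t in Ioi (0:ℝ), Real.cos (b * t) * t ^ (s - 1) * Real.exp (-t) := by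
    apply setIntegral_congr_fun measurableSet_Ioi
    intro t ht
    dsimp only
    have : (-((1 - (b:ℂ) * I) * t)) = Complex.mk (-t) (b * t) := by
      apply Complex.ext <;> simp
    rw [this]
    simp [Complex.exp_re]
    ring
  have hright : ((↑(Real.Gamma s) : ℂ) * ((1:ℂ) - b * I) ^ (-s : ℂ)).re
      = Real.Gamma s * ((1 + b^2) ^ (-(s/2)) * Real.cos (s * Real.arctan b)) := by
    rw [cpow_eval s b, ← mul_assoc, ← Complex.ofReal_mul, re_eval]
    ring
  rw [hleft, hright] at hre
  exact hre

end Stmt9Aux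

open Stmt9Aux

theorem stmt_9 (α β d : ℝ) (hα0 : 0 < α) (hα2 : α < 2) (hα1 : α ≠ 1)
    (hβ : β ∈ Set.Icc (-1 : ℝ) 1) (hd : 0 < d) :
    ∫ r in Set.Ioi (0:ℝ),
        Real.cos (β * Real.tan (Real.pi * α / 2) * r ^ α) * r ^ (d - 1) * Real.exp (-(r ^ α))
      = (Real.cos (α * (α⁻¹ * Real.arctan (β * Real.tan (Real.pi * α / 2))))) ^ (d / α)
          * Real.cos (d * (α⁻¹ * Real.arctan (β * Real.tan (Real.pi * α / 2))))
          * Real.Gamma (1 + d / α) / d := by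
  set b : ℝ := β * Real.tan (Real.pi * α / 2) with hb
  set s : ℝ := d / α with hs
  have hs0 : 0 < s := div_pos hd hα0
  have hb2 : (0:ℝ) < 1 + b^2 := by positivity
  -- change of variables
  have hchg := MeasureTheory.integral_comp_rpow_Ioi
    (fun y => Real.cos (b * y) * y ^ (s - 1) * Real.exp (-y)) hα0.ne'
  have hstep1 : ∫ r in Set.Ioi (0:ℝ),
      Real.cos (b * r ^ α) * r ^ (d - 1) * Real.exp (-(r ^ α))
      = (1/α) * ∫ t in Ioi (0:ℝ), Real.cos (b * t) * t ^ (s - 1) * Real.exp (-t) := by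
    rw [← hchg, ← integral_const_mul]
    apply setIntegral_congr_fun measurableSet_Ioi
    intro x hx
    have hx' : (0:ℝ) < x := hx
    have hpow : (x ^ α) ^ (s - 1) = x ^ (d - α) := by
      rw [← Real.rpow_mul hx'.le]
      congr 1
      rw [hs]
      field_simp
    have hxadd : x ^ (α - 1) * x ^ (d - α) = x ^ (d - 1) := by
      rw [← Real.rpow_add hx']
      congr 1
      ring
    dsimp only
    rw [smul_eq_mul, _root_.abs_of_pos hα0, hpow, ← hxadd]
    field_simp
  rw [hstep1, real_key hs0 b]
  have h1 : α * (α⁻¹ * Real.arctan b) = Real.arctan b := by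
    field_simp
  have h2 : d * (α⁻¹ * Real.arctan b) = s * Real.arctan b := by
    rw [hs]; ring
  have h3 : Real.cos (Real.arctan b) ^ (d/α) = (1 + b^2) ^ (-(s/2)) := by
    have hc : Real.cos (Real.arctan b) = (1 + b^2) ^ (-(1/2) : ℝ) := by
      rw [Real.cos_arctan, one_div, Real.sqrt_eq_rpow, ← Real.rpow_neg hb2.le]
    rw [← hs, hc, ← Real.rpow_mul hb2.le]
    congr 1
    ring
  have h4 : Real.Gamma (1 + s) = s * Real.Gamma s := by
    rw [add_comm, Real.Gamma_add_one hs0.ne']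
  rw [h1, h2, h3, h4, hs]
  field_simp
end
end

section
/- For 0 < α < 2, α ≠ 1, -1 ≤ β ≤ 1 with β ≠ 0, and θ₀ = α^{-1} arctan(β tan(πα/2)), and for any d with -α < d and d ≠ 0: ∫_0^∞ sin(-β tan(πα/2) r^α) r^{d-1} e^{-r^α} dr = -(cos αθ₀)^{d/α} sin(dθ₀) Γ(1 + d/α)/d, where for -α < d < 0 the left-hand integral is interpreted with integrand sin(-β tan(πα/2) r^α) r^{d-1} e^{-r^α} (which is O(r^{d+α-1}) near 0, hence integrable). -/
open Real MeasureTheory Set Filter Complex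

noncomputable def Fc (s t : ℝ) : ℂ :=
  ∫ u in Set.Ioi (0:ℝ), ((u ^ (s-1) : ℝ) : ℂ) * Complex.exp ((t * Complex.I - 1) * u)

lemma ker_norm (c t : ℝ) {u : ℝ} (hu : 0 < u) :
    ‖((u ^ c : ℝ) : ℂ) * Complex.exp ((t * Complex.I - 1) * u)‖
      = Real.exp (-u) * u ^ c := by
  rw [norm_mul, Complex.norm_exp, Complex.norm_real, Real.norm_eq_abs]
  have h1 : ((t * Complex.I - 1) * u).re = -u := by
    simp [Complex.mul_re]
  rw [h1, _root_.abs_of_nonneg (Real.rpow_nonneg hu.le c), mul_comm]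

lemma meas_ker (c t : ℝ) :
    AEStronglyMeasurable
      (fun u : ℝ => ((u ^ c : ℝ) : ℂ) * Complex.exp ((t * Complex.I - 1) * u))
      (volume.restrict (Set.Ioi 0)) := by
  apply Measurable.aestronglyMeasurable
  exact (Complex.measurable_ofReal.comp (measurable_id.pow_const c)).mul
    (Complex.measurable_exp.comp (Complex.measurable_ofReal.const_mul _))

lemma int_ker {c : ℝ} (hc : -1 < c) (t : ℝ) :
    IntegrableOn (fun u : ℝ => ((u ^ c : ℝ) : ℂ) * Complex.exp ((t * Complex.I - 1) * u))
      (Set.Ioi 0) := by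
  have hb := Real.GammaIntegral_convergent (show 0 < c + 1 by linarith)
  rw [add_sub_cancel_right] at hb
  refine hb.mono' (meas_ker c t) ?_
  filter_upwards [ae_restrict_mem measurableSet_Ioi] with u hu
  rw [ker_norm c t hu]

lemma Fc_zero {s : ℝ} (hs : 0 < s) : Fc s 0 = Real.Gamma s := by
  have h2 : Fc s 0 = ∫ u in Set.Ioi (0:ℝ), ((rexp (-u) * u ^ (s-1) : ℝ) : ℂ) := by
    refine setIntegral_congr_fun measurableSet_Ioi fun u hu => ?_
    have h1 : ((0:ℝ) * Complex.I - 1) * u = ((-u : ℝ) : ℂ) := by push_cast; ring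
    rw [h1, ← Complex.ofReal_exp]
    push_cast
    ring
  rw [h2, Real.Gamma_eq_integral hs]
  exact integral_ofReal
lemma exp_deriv_aux (c : ℂ) (u : ℝ) :
    HasDerivAt (fun u : ℝ => Complex.exp (c * u)) (c * Complex.exp (c * u)) u := by
  have h1 : HasDerivAt (fun z : ℂ => Complex.exp (c * z)) (Complex.exp (c * u) * (c * 1)) u :=
    HasDerivAt.comp _ (Complex.hasDerivAt_exp _) ((hasDerivAt_id _).const_mul c)
  simpa [mul_comm] using h1.comp_ofReal

lemma tendsto_ker_atTop (c t : ℝ) :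
    Tendsto (fun u : ℝ => ((u ^ c : ℝ) : ℂ) * Complex.exp ((t * Complex.I - 1) * u))
      atTop (nhds 0) := by
  apply squeeze_zero_norm' (a := fun u : ℝ => u ^ c * rexp (-1 * u))
  · filter_upwards [eventually_gt_atTop (0:ℝ)] with u hu
    rw [ker_norm c t hu]
    simp [mul_comm]
  · exact tendsto_rpow_mul_exp_neg_mul_atTop_nhds_zero c 1 one_pos

lemma Fc_rec {s : ℝ} (hs : 0 < s) (t : ℝ) :
    (1 - (t : ℂ) * Complex.I) * Fc (s+1) t = (s : ℂ) * Fc s t := by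
  set c : ℂ := t * Complex.I - 1 with hc
  set f : ℝ → ℂ := fun u => ((u ^ s : ℝ) : ℂ) * Complex.exp (c * u) with hf
  set f' : ℝ → ℂ := fun u =>
    (s : ℂ) * (((u ^ (s-1) : ℝ) : ℂ) * Complex.exp (c * u))
      + c * (((u ^ s : ℝ) : ℂ) * Complex.exp (c * u)) with hf'
  have hderiv : ∀ u ∈ Set.Ioi (0:ℝ), HasDerivAt f (f' u) u := by
    intro u hu
    have h1 : HasDerivAt (fun u : ℝ => ((u ^ s : ℝ) : ℂ)) ((s * u ^ (s-1) : ℝ) : ℂ) u :=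
      (Real.hasDerivAt_rpow_const (Or.inl (ne_of_gt hu))).ofReal_comp
    have h2 := exp_deriv_aux c u
    have := h1.mul h2
    refine this.congr_deriv ?_
    push_cast
    ring
  have hcont : ContinuousWithinAt f (Set.Ici (0:ℝ)) 0 := by
    apply ContinuousWithinAt.mul
    · exact (Complex.continuous_ofReal.continuousAt.comp_continuousWithinAt
        ((Real.continuousAt_rpow_const 0 s (Or.inr hs.le)).continuousWithinAt))
    · exact (Complex.continuous_exp.comp
        (continuous_const.mul Complex.continuous_ofReal)).continuousWithinAt
  have hint1 : IntegrableOn (fun u : ℝ => (s : ℂ) * (((u ^ (s-1) : ℝ) : ℂ) * Complex.exp (c * u)))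
      (Set.Ioi 0) := (int_ker (by linarith) t).const_mul _
  have hint2 : IntegrableOn (fun u : ℝ => c * (((u ^ s : ℝ) : ℂ) * Complex.exp (c * u)))
      (Set.Ioi 0) := (int_ker (by linarith) t).const_mul _
  have hint : IntegrableOn f' (Set.Ioi 0) := hint1.add hint2
  have htend : Tendsto f atTop (nhds 0) := tendsto_ker_atTop s t
  have key := integral_Ioi_of_hasDerivAt_of_tendsto hcont hderiv hint htend
  have hf0 : f 0 = 0 := by
    simp [hf, Real.zero_rpow (ne_of_gt hs)]
  rw [hf0, sub_zero] at key
  have hsplit : ∫ u in Set.Ioi (0:ℝ), f' u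
      = (s : ℂ) * Fc s t + c * Fc (s+1) t := by
    rw [hf']
    rw [integral_add hint1 hint2, integral_const_mul, integral_const_mul]
    rw [Fc, Fc, add_sub_cancel_right]
  rw [hsplit] at key
  have : c = -(1 - (t:ℂ) * Complex.I) := by rw [hc]; ring
  rw [this] at key
  linear_combination -key
lemma Fc_hasDeriv {s : ℝ} (hs : 0 < s) (t : ℝ) :
    HasDerivAt (fun x => Fc s x) (Complex.I * Fc (s+1) t) t := by
  have hb := Real.GammaIntegral_convergent (show 0 < s + 1 by linarith)
  rw [add_sub_cancel_right] at hb
  have main := hasDerivAt_integral_of_dominated_loc_of_deriv_le (x₀ := t)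
    (F := fun (x : ℝ) (u : ℝ) => ((u ^ (s-1) : ℝ) : ℂ) * Complex.exp (((x:ℂ) * Complex.I - 1) * u))
    (F' := fun (x : ℝ) (u : ℝ) =>
      Complex.I * (((u ^ s : ℝ) : ℂ) * Complex.exp (((x:ℂ) * Complex.I - 1) * u)))
    (bound := fun u => rexp (-u) * u ^ s)
    (μ := volume.restrict (Set.Ioi 0)) (Metric.ball_mem_nhds t one_pos)
    (Eventually.of_forall fun x => meas_ker (s-1) x)
    (int_ker (by linarith) t)
    ((meas_ker s t).const_mul _)
    ?_ hb ?_
  · have h2 : (∫ u in Set.Ioi (0:ℝ),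
        Complex.I * (((u ^ s : ℝ) : ℂ) * Complex.exp ((t * Complex.I - 1) * u)))
        = Complex.I * Fc (s+1) t := by
      rw [integral_const_mul, Fc, add_sub_cancel_right]
    rw [← h2]
    exact main.2
  · filter_upwards [ae_restrict_mem measurableSet_Ioi] with u hu
    intro x hx
    rw [norm_mul, Complex.norm_I, one_mul, ker_norm s x hu]
  · filter_upwards [ae_restrict_mem measurableSet_Ioi] with u hu
    intro x hx
    have h1 : HasDerivAt (fun z : ℂ => Complex.exp ((z * Complex.I - 1) * u))
        (Complex.exp (((x:ℂ) * Complex.I - 1) * u) * (Complex.I * u)) (x : ℂ) := by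
      have hin : HasDerivAt (fun z : ℂ => (z * Complex.I - 1) * u) (Complex.I * u) (x : ℂ) := by
        simpa using (((hasDerivAt_id ((x:ℝ) : ℂ)).mul_const Complex.I).sub_const 1).mul_const
          (u : ℂ)
      exact HasDerivAt.comp _ (Complex.hasDerivAt_exp _) hin
    have h2 := (h1.comp_ofReal).const_mul (((u ^ (s-1) : ℝ)) : ℂ)
    refine h2.congr_deriv ?_
    have h3 : (u:ℝ) ^ s = u ^ (s-1) * u := by
      nth_rewrite 1 [show s = s - 1 + 1 by ring]
      exact Real.rpow_add_one (ne_of_gt hu) _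
    rw [h3]
    push_cast
    ring
lemma Fc_eq {s : ℝ} (hs : 0 < s) (t : ℝ) :
    Fc s t = (Real.Gamma s : ℂ) * (((1 + t^2) ^ (-s/2) : ℝ) : ℂ)
      * Complex.exp (((s * Real.arctan t : ℝ) : ℂ) * Complex.I) := by
  set H : ℝ → ℂ := fun x => Fc s x *
    ((((1 + x^2) ^ (s/2) : ℝ) : ℂ)
      * Complex.exp (((-(s * Real.arctan x) : ℝ) : ℂ) * Complex.I)) with hHdef
  have hHderiv : ∀ x : ℝ, HasDerivAt H 0 x := by
    intro x
    have ha : (0:ℝ) < 1 + x^2 := by positivity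
    have haC : ((1:ℂ) + (x:ℂ)^2) ≠ 0 := by
      have : ((1 + x^2 : ℝ) : ℂ) ≠ 0 := Complex.ofReal_ne_zero.mpr (ne_of_gt ha)
      push_cast at this
      exact this
    have h1xI : (1:ℂ) - (x:ℂ) * Complex.I ≠ 0 := by
      intro h
      have := congrArg Complex.re h
      simp at this
    have hA := Fc_hasDeriv hs x
    have hkey := Fc_rec hs x
    have hR : HasDerivAt (fun x : ℝ => ((1 + x^2) ^ (s/2) : ℝ))
        ((s/2 * (1 + x^2) ^ (s/2 - 1)) * (2*x)) x := by
      have h1 : HasDerivAt (fun x : ℝ => 1 + x^2) (2*x) x := by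
        simpa using ((hasDerivAt_pow 2 x).const_add 1)
      exact (Real.hasDerivAt_rpow_const (p := s/2) (Or.inl (ne_of_gt ha))).comp x h1
    have hg : HasDerivAt (fun x : ℝ => -(s * Real.arctan x)) (-(s * (1/(1+x^2)))) x :=
      ((Real.hasDerivAt_arctan x).const_mul s).neg
    have hE : HasDerivAt (fun x : ℝ => Complex.exp (((-(s * Real.arctan x) : ℝ) : ℂ) * Complex.I))
        (Complex.exp (((-(s * Real.arctan x) : ℝ) : ℂ) * Complex.I)
          * (((-(s * (1/(1+x^2))) : ℝ) : ℂ) * Complex.I)) x :=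
      (hg.ofReal_comp.mul_const Complex.I).cexp
    have hD := hA.mul (hR.ofReal_comp.mul hE)
    refine hD.congr_deriv ?_
    symm
    simp only [Pi.mul_apply]
    -- goal : 0 = derivative expression
    have hscal : Complex.I * Fc (s+1) x * (1+(x:ℂ)^2) + (s:ℂ)*(x:ℂ)*Fc s x
        - (s:ℂ)*Complex.I*Fc s x = 0 := by
      have h2 : ((1:ℂ) - (x:ℂ)*Complex.I) * (Complex.I * Fc (s+1) x * (1+(x:ℂ)^2)
          + (s:ℂ)*(x:ℂ)*Fc s x - (s:ℂ)*Complex.I*Fc s x) = ((1:ℂ) - (x:ℂ)*Complex.I) * 0 := by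
        linear_combination (Complex.I * (1+(x:ℂ)^2)) * hkey
          + ((s:ℂ) * Fc s x * (x:ℂ)) * Complex.I_sq
      exact mul_left_cancel₀ h1xI h2
    have e1 : (((1 + x^2) ^ (s/2) : ℝ) : ℂ)
        = (((1 + x^2) ^ (s/2 - 1) : ℝ) : ℂ) * (1 + (x:ℂ)^2) := by
      have h3 : ((1 + x^2) ^ (s/2) : ℝ) = (1 + x^2) ^ (s/2 - 1) * (1 + x^2) := by
        nth_rewrite 1 [show s/2 = s/2 - 1 + 1 by ring]
        exact Real.rpow_add_one (ne_of_gt ha) _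
      rw [h3]
      push_cast
      ring
    rw [e1]
    have e3 : (((s/2 * (1 + x^2) ^ (s/2 - 1)) * (2*x) : ℝ) : ℂ)
        = (s:ℂ) * (x:ℂ) * (((1 + x^2) ^ (s/2 - 1) : ℝ) : ℂ) := by
      push_cast
      ring
    rw [e3]
    have e2 : ((-(s * (1/(1+x^2))) : ℝ) : ℂ) * (1 + (x:ℂ)^2) = -(s:ℂ) := by
      have : ((-(s * (1/(1+x^2))) : ℝ) : ℂ) = -((s:ℂ) * (1/(1+(x:ℂ)^2))) := by
        push_cast; ring
      rw [this]
      field_simp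
    set E := Complex.exp (((-(s * Real.arctan x) : ℝ) : ℂ) * Complex.I) with hE'
    set ρ := (((1 + x^2) ^ (s/2 - 1) : ℝ) : ℂ) with hρ
    -- now pure algebra
    have e2' : ((-(s * (1/(1+x^2))) : ℝ) : ℂ) = -(s:ℂ) / (1 + (x:ℂ)^2) := by
      push_cast; ring
    rw [e2']
    field_simp
    linear_combination (-(ρ * E)) * hscal
  have hconst : H t = H 0 :=
    is_const_of_deriv_eq_zero (fun y => (hHderiv y).differentiableAt)
      (fun y => (hHderiv y).deriv) t 0
  have h0 : H t = (Real.Gamma s : ℂ) := by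
    rw [hconst, hHdef]
    simp only
    rw [Fc_zero hs]
    norm_num
  set Rc : ℂ := (((1 + t^2) ^ (s/2) : ℝ) : ℂ) with hRc
  have hR0 : Rc ≠ 0 :=
    Complex.ofReal_ne_zero.mpr (ne_of_gt (Real.rpow_pos_of_pos (by positivity) _))
  have hRR : Rc * Rc⁻¹ = 1 := mul_inv_cancel₀ hR0
  have hEE : Complex.exp (((-(s * Real.arctan t) : ℝ) : ℂ) * Complex.I)
      * Complex.exp (((s * Real.arctan t : ℝ) : ℂ) * Complex.I) = 1 := by
    rw [← Complex.exp_add, ← Complex.exp_zero]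
    congr 1
    push_cast
    ring
  have hRneg : (((1 + t^2) ^ (-s/2) : ℝ) : ℂ) = Rc⁻¹ := by
    rw [hRc, show -s/2 = -(s/2) by ring, Real.rpow_neg (by positivity)]
    push_cast
    rfl
  rw [hRneg, ← h0, hHdef]
  simp only
  linear_combination (-(Fc s t)) * hRR
    + (-(Fc s t * Rc * Rc⁻¹)) * hEE
lemma int_cos {s : ℝ} (hs : 0 < s) (t : ℝ) :
    IntegrableOn (fun u : ℝ => u ^ (s-1) * rexp (-u) * Real.cos (t*u)) (Set.Ioi 0) := by
  refine (Real.GammaIntegral_convergent hs).mono' ?_ ?_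
  · exact (((measurable_id.pow_const _).mul
      (Real.measurable_exp.comp measurable_neg)).mul
      (Real.measurable_cos.comp (measurable_id.const_mul t))).aestronglyMeasurable
  · filter_upwards [ae_restrict_mem measurableSet_Ioi] with u hu
    have h1 : (0:ℝ) < u := hu
    rw [Real.norm_eq_abs, abs_mul, abs_mul,
      _root_.abs_of_nonneg (Real.rpow_nonneg h1.le _),
      _root_.abs_of_nonneg (Real.exp_pos _).le]
    calc u ^ (s-1) * rexp (-u) * |Real.cos (t*u)|
        ≤ u ^ (s-1) * rexp (-u) * 1 := by
          gcongr
          exact Real.abs_cos_le_one _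
      _ = rexp (-u) * u ^ (s-1) := by ring

lemma int_sin {s : ℝ} (hs : 0 < s) (t : ℝ) :
    IntegrableOn (fun u : ℝ => u ^ (s-1) * rexp (-u) * Real.sin (t*u)) (Set.Ioi 0) := by
  refine (Real.GammaIntegral_convergent hs).mono' ?_ ?_
  · exact (((measurable_id.pow_const _).mul
      (Real.measurable_exp.comp measurable_neg)).mul
      (Real.measurable_sin.comp (measurable_id.const_mul t))).aestronglyMeasurable
  · filter_upwards [ae_restrict_mem measurableSet_Ioi] with u hu
    have h1 : (0:ℝ) < u := hu
    rw [Real.norm_eq_abs, abs_mul, abs_mul,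
      _root_.abs_of_nonneg (Real.rpow_nonneg h1.le _),
      _root_.abs_of_nonneg (Real.exp_pos _).le]
    calc u ^ (s-1) * rexp (-u) * |Real.sin (t*u)|
        ≤ u ^ (s-1) * rexp (-u) * 1 := by
          gcongr
          exact Real.abs_sin_le_one _
      _ = rexp (-u) * u ^ (s-1) := by ring

lemma Jcos_Jsin {s : ℝ} (hs : 0 < s) (t : ℝ) :
    (∫ u in Set.Ioi (0:ℝ), u ^ (s-1) * rexp (-u) * Real.cos (t*u))
        = Real.Gamma s * (1+t^2) ^ (-s/2) * Real.cos (s * Real.arctan t)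
      ∧ (∫ u in Set.Ioi (0:ℝ), u ^ (s-1) * rexp (-u) * Real.sin (t*u))
        = Real.Gamma s * (1+t^2) ^ (-s/2) * Real.sin (s * Real.arctan t) := by
  have h := Fc_eq hs t
  have hsplit : Fc s t
      = ((∫ u in Set.Ioi (0:ℝ), u ^ (s-1) * rexp (-u) * Real.cos (t*u) : ℝ) : ℂ)
        + ((∫ u in Set.Ioi (0:ℝ), u ^ (s-1) * rexp (-u) * Real.sin (t*u) : ℝ) : ℂ)
          * Complex.I := by
    have hptwise : ∀ u ∈ Set.Ioi (0:ℝ),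
        ((u ^ (s-1) : ℝ) : ℂ) * Complex.exp (((t:ℂ) * Complex.I - 1) * u)
        = ((u ^ (s-1) * rexp (-u) * Real.cos (t*u) : ℝ) : ℂ)
          + ((u ^ (s-1) * rexp (-u) * Real.sin (t*u) : ℝ) : ℂ) * Complex.I := by
      intro u hu
      have h1 : ((t:ℂ) * Complex.I - 1) * u = ((t*u : ℝ) : ℂ) * Complex.I + ((-u : ℝ) : ℂ) := by
        push_cast; ring
      rw [h1, Complex.exp_add, Complex.exp_mul_I, ← Complex.ofReal_exp,
        ← Complex.ofReal_cos, ← Complex.ofReal_sin]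
      push_cast
      ring
    have hic : Integrable (fun u : ℝ => ((u ^ (s-1) * rexp (-u) * Real.cos (t*u) : ℝ) : ℂ))
        (volume.restrict (Set.Ioi 0)) := (int_cos hs t).ofReal
    have his : Integrable (fun u : ℝ => ((u ^ (s-1) * rexp (-u) * Real.sin (t*u) : ℝ) : ℂ)
          * Complex.I) (volume.restrict (Set.Ioi 0)) :=
      ((int_sin hs t).ofReal).mul_const Complex.I
    rw [Fc, setIntegral_congr_fun measurableSet_Ioi hptwise, integral_add hic his,
      integral_mul_const]
    congr 1 <;> [skip; congr 1] <;> exact integral_ofReal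
  rw [hsplit] at h
  have hrhs : (Real.Gamma s : ℂ) * (((1 + t^2) ^ (-s/2) : ℝ) : ℂ)
      * Complex.exp (((s * Real.arctan t : ℝ) : ℂ) * Complex.I)
      = ((Real.Gamma s * (1+t^2) ^ (-s/2) * Real.cos (s * Real.arctan t) : ℝ) : ℂ)
        + ((Real.Gamma s * (1+t^2) ^ (-s/2) * Real.sin (s * Real.arctan t) : ℝ) : ℂ)
          * Complex.I := by
    rw [Complex.exp_mul_I, ← Complex.ofReal_cos, ← Complex.ofReal_sin]
    push_cast
    ring
  rw [hrhs] at h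
  rw [Complex.ext_iff] at h
  obtain ⟨hre, him⟩ := h
  simp only [Complex.add_re, Complex.add_im, Complex.mul_re, Complex.mul_im,
    Complex.ofReal_re, Complex.ofReal_im, Complex.I_re, Complex.I_im] at hre him
  constructor
  · linarith
  · linarith
lemma Jsin_all {s : ℝ} (hs1 : -1 < s) (hs0 : s ≠ 0) (t : ℝ) :
    ∫ u in Set.Ioi (0:ℝ), u ^ (s-1) * rexp (-u) * Real.sin (t*u)
      = Real.Gamma s * (1+t^2) ^ (-s/2) * Real.sin (s * Real.arctan t) := by
  rcases lt_or_gt_of_ne hs0 with hneg | hpos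
  swap
  · exact (Jcos_Jsin hpos t).2
  -- negative case : -1 < s < 0
  have hs1' : 0 < s + 1 := by linarith
  set f : ℝ → ℝ := fun u => u ^ s * Real.sin (t*u) * rexp (-u) with hf
  set f' : ℝ → ℝ := fun u =>
    s * (u ^ (s-1) * rexp (-u) * Real.sin (t*u))
      + t * (u ^ s * rexp (-u) * Real.cos (t*u))
      - u ^ s * rexp (-u) * Real.sin (t*u) with hf'
  have hb0 := Real.GammaIntegral_convergent hs1'
  rw [add_sub_cancel_right] at hb0
  -- integrability of the pieces
  have hg1 : IntegrableOn (fun u : ℝ => u ^ (s-1) * rexp (-u) * Real.sin (t*u))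
      (Set.Ioi 0) := by
    refine (hb0.const_mul |t|).mono' ?_ ?_
    · exact (((measurable_id.pow_const _).mul
        (Real.measurable_exp.comp measurable_neg)).mul
        (Real.measurable_sin.comp (measurable_id.const_mul t))).aestronglyMeasurable
    · filter_upwards [ae_restrict_mem measurableSet_Ioi] with u hu
      have h1 : (0:ℝ) < u := hu
      rw [Real.norm_eq_abs, abs_mul, abs_mul,
        _root_.abs_of_nonneg (Real.rpow_nonneg h1.le _),
        _root_.abs_of_nonneg (Real.exp_pos _).le]
      have h2 : |Real.sin (t*u)| ≤ |t| * u := by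
        calc |Real.sin (t*u)| ≤ |t*u| := Real.abs_sin_le_abs
          _ = |t| * u := by rw [abs_mul, _root_.abs_of_nonneg h1.le]
      calc u ^ (s-1) * rexp (-u) * |Real.sin (t*u)|
          ≤ u ^ (s-1) * rexp (-u) * (|t| * u) := by gcongr
        _ = |t| * (rexp (-u) * (u ^ (s-1) * u)) := by ring
        _ = |t| * (rexp (-u) * u ^ s) := by
            rw [show (u:ℝ) ^ s = u ^ (s-1) * u by
              nth_rewrite 1 [show s = s - 1 + 1 by ring]
              exact Real.rpow_add_one (ne_of_gt h1) _]
  have hg2 : IntegrableOn (fun u : ℝ => u ^ s * rexp (-u) * Real.cos (t*u)) (Set.Ioi 0) := by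
    have := int_cos hs1' t
    rwa [add_sub_cancel_right] at this
  have hg3 : IntegrableOn (fun u : ℝ => u ^ s * rexp (-u) * Real.sin (t*u)) (Set.Ioi 0) := by
    have := int_sin hs1' t
    rwa [add_sub_cancel_right] at this
  have hint : IntegrableOn f' (Set.Ioi 0) := ((hg1.const_mul s).add (hg2.const_mul t)).sub hg3
  -- derivative
  have hderiv : ∀ u ∈ Set.Ioi (0:ℝ), HasDerivAt f (f' u) u := by
    intro u hu
    have h1 : HasDerivAt (fun u : ℝ => u ^ s) (s * u ^ (s-1)) u :=
      Real.hasDerivAt_rpow_const (Or.inl (ne_of_gt hu))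
    have hinner : HasDerivAt (fun u : ℝ => t * u) t u := by
      simpa using (hasDerivAt_id u).const_mul t
    have h2 : HasDerivAt (fun u : ℝ => Real.sin (t*u)) (Real.cos (t*u) * t) u := hinner.sin
    have h3 : HasDerivAt (fun u : ℝ => rexp (-u)) (-rexp (-u)) u := by
      exact ((Real.hasDerivAt_exp (-u)).comp u (hasDerivAt_neg u)).congr_deriv (by ring)
    have := (h1.mul h2).mul h3
    refine this.congr_deriv ?_
    simp only [Pi.mul_apply]
    rw [hf']
    have h4 : (u:ℝ) ^ s = u ^ (s-1) * u := by
      nth_rewrite 1 [show s = s - 1 + 1 by ring]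
      exact Real.rpow_add_one (ne_of_gt hu) _
    ring
  -- continuity at 0
  have hcont : ContinuousWithinAt f (Set.Ici (0:ℝ)) 0 := by
    have hf0 : f 0 = 0 := by simp [hf]
    rw [ContinuousWithinAt, hf0]
    apply squeeze_zero_norm' (a := fun u : ℝ => |t| * (u ^ (s+1) * rexp (-u)))
    · filter_upwards [self_mem_nhdsWithin] with u (hu : u ∈ Set.Ici (0:ℝ))
      rcases eq_or_lt_of_le (Set.mem_Ici.mp hu) with h | h
      · simp [hf, ← h, Real.zero_rpow hs0, Real.zero_rpow (ne_of_gt hs1')]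
      · rw [Real.norm_eq_abs, hf]
        simp only
        rw [abs_mul, abs_mul, _root_.abs_of_nonneg (Real.rpow_nonneg h.le _),
          _root_.abs_of_nonneg (Real.exp_pos _).le]
        have h2 : |Real.sin (t*u)| ≤ |t| * u := by
          calc |Real.sin (t*u)| ≤ |t*u| := Real.abs_sin_le_abs
            _ = |t| * u := by rw [abs_mul, _root_.abs_of_nonneg h.le]
        calc u ^ s * |Real.sin (t*u)| * rexp (-u)
            ≤ u ^ s * (|t| * u) * rexp (-u) := by gcongr
          _ = |t| * (u ^ s * u * rexp (-u)) := by ring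
          _ = |t| * (u ^ (s+1) * rexp (-u)) := by rw [Real.rpow_add_one (ne_of_gt h)]
    · have hrp : ContinuousWithinAt (fun u : ℝ => u ^ (s+1) * rexp (-u))
          (Set.Ici (0:ℝ)) 0 :=
        ((Real.continuousAt_rpow_const 0 (s+1) (Or.inr hs1'.le)).continuousWithinAt).mul
          ((Real.continuous_exp.comp continuous_neg).continuousWithinAt)
      have hc : ContinuousWithinAt (fun u : ℝ => |t| * (u ^ (s+1) * rexp (-u)))
          (Set.Ici (0:ℝ)) 0 := hrp.const_mul |t|
      have h00 : |t| * ((0:ℝ) ^ (s+1) * rexp (-0)) = 0 := by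
        simp [Real.zero_rpow (ne_of_gt hs1')]
      have := hc.tendsto
      rw [h00] at this
      exact this
  -- limit at infinity
  have htend : Tendsto f atTop (nhds 0) := by
    apply squeeze_zero_norm' (a := fun u : ℝ => u ^ s * rexp (-1 * u))
    · filter_upwards [eventually_gt_atTop (0:ℝ)] with u hu
      rw [Real.norm_eq_abs, hf]
      simp only
      rw [abs_mul, abs_mul, _root_.abs_of_nonneg (Real.rpow_nonneg hu.le _),
        _root_.abs_of_nonneg (Real.exp_pos _).le]
      calc u ^ s * |Real.sin (t*u)| * rexp (-u)
          ≤ u ^ s * 1 * rexp (-u) := by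
            gcongr
            exact Real.abs_sin_le_one _
        _ = u ^ s * rexp (-1 * u) := by rw [neg_one_mul]; ring
    · exact tendsto_rpow_mul_exp_neg_mul_atTop_nhds_zero s 1 one_pos
  have key := integral_Ioi_of_hasDerivAt_of_tendsto hcont hderiv hint htend
  have hf0 : f 0 = 0 := by simp [hf]
  rw [hf0, sub_zero] at key
  have hI1 : IntegrableOn (fun u : ℝ => s * (u ^ (s-1) * rexp (-u) * Real.sin (t*u)))
      (Set.Ioi 0) := hg1.const_mul s
  have hI2 : IntegrableOn (fun u : ℝ => t * (u ^ s * rexp (-u) * Real.cos (t*u)))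
      (Set.Ioi 0) := hg2.const_mul t
  have hI12 : IntegrableOn (fun u : ℝ => s * (u ^ (s-1) * rexp (-u) * Real.sin (t*u))
      + t * (u ^ s * rexp (-u) * Real.cos (t*u))) (Set.Ioi 0) := hI1.add hI2
  rw [hf', integral_sub hI12 hg3, integral_add hI1 hI2,
    integral_const_mul, integral_const_mul] at key
  have jc := (Jcos_Jsin hs1' t).1
  have js := (Jcos_Jsin hs1' t).2
  rw [add_sub_cancel_right] at jc js
  rw [jc, js] at key
  -- trigonometric simplification
  set θ := Real.arctan t with hθ
  set w := Real.sqrt (1 + t^2) with hw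
  have hw2 : w^2 = 1 + t^2 := Real.sq_sqrt (by positivity)
  have hwpos : 0 < w := Real.sqrt_pos.mpr (by positivity)
  have hsin : Real.sin θ = t / w := Real.sin_arctan t
  have hcos : Real.cos θ = 1 / w := Real.cos_arctan t
  have hadd : (s+1) * θ = s * θ + θ := by ring
  have hRpow : (1+t^2) ^ (-(s+1)/2) = (1+t^2) ^ (-s/2) / w := by
    rw [show -(s+1)/2 = -s/2 + (-1/2 : ℝ) by ring, Real.rpow_add (by positivity)]
    congr 1
    rw [show (-1/2 : ℝ) = -(1/2) by ring, Real.rpow_neg (by positivity),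
      ← Real.sqrt_eq_rpow]
  have hGamma : Real.Gamma (s+1) = s * Real.Gamma s := Real.Gamma_add_one hs0
  rw [hadd, Real.sin_add, Real.cos_add, hsin, hcos, hRpow, hGamma] at key
  have hw0 : w ≠ 0 := ne_of_gt hwpos
  have hkey2 : s * (∫ u in Set.Ioi (0:ℝ), u ^ (s-1) * rexp (-u) * Real.sin (t*u))
      = s * (Real.Gamma s * (1+t^2) ^ (-s/2) * Real.sin (s * θ)) := by
    have hinv : w * w⁻¹ = 1 := mul_inv_cancel₀ hw0
    linear_combination key
      + (-(s * Real.Gamma s * (1+t^2) ^ (-s/2) * Real.sin (s*θ)) / w^2) * hw2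
      + (s * Real.Gamma s * (1+t^2) ^ (-s/2) * Real.sin (s*θ) * (w * w⁻¹ + 1)) * hinv
  exact mul_left_cancel₀ hs0 hkey2
theorem stmt_10 (α β d : ℝ) (hα0 : 0 < α) (hα2 : α < 2) (hα1 : α ≠ 1)
    (hβ : β ∈ Set.Icc (-1 : ℝ) 1) (hβ0 : β ≠ 0) (hd : -α < d) (hd0 : d ≠ 0) :
    ∫ r in Set.Ioi (0:ℝ),
        Real.sin (-β * Real.tan (Real.pi * α / 2) * r ^ α) * r ^ (d - 1) * Real.exp (-(r ^ α))
      = -((Real.cos (α * (α⁻¹ * Real.arctan (β * Real.tan (Real.pi * α / 2))))) ^ (d / α)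
          * Real.sin (d * (α⁻¹ * Real.arctan (β * Real.tan (Real.pi * α / 2))))
          * Real.Gamma (1 + d / α) / d) := by
  set τ := β * Real.tan (Real.pi * α / 2) with hτ
  set s := d / α with hs
  have hα0' : α ≠ 0 := ne_of_gt hα0
  have hs0 : s ≠ 0 := div_ne_zero hd0 hα0'
  have hs1 : -1 < s := by
    rw [hs, lt_div_iff₀ hα0]
    linarith
  have hαθ : α * (α⁻¹ * Real.arctan τ) = Real.arctan τ := by field_simp
  have hdθ : d * (α⁻¹ * Real.arctan τ) = s * Real.arctan τ := by rw [hs]; ring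
  rw [hαθ, hdθ]
  have hsub := integral_comp_rpow_Ioi_of_pos
    (g := fun y : ℝ => α⁻¹ * (y ^ (s-1) * rexp (-y) * Real.sin (-τ * y))) hα0
  simp only [smul_eq_mul] at hsub
  have hLHS : (∫ r in Set.Ioi (0:ℝ),
        Real.sin (-β * Real.tan (Real.pi * α / 2) * r ^ α) * r ^ (d - 1) * rexp (-(r ^ α)))
      = ∫ x in Set.Ioi (0:ℝ),
          α * x ^ (α - 1) * (α⁻¹ * ((x ^ α) ^ (s-1) * rexp (-(x ^ α))
            * Real.sin (-τ * x ^ α))) := by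
    refine setIntegral_congr_fun measurableSet_Ioi fun x hx => ?_
    have hx0 : (0:ℝ) < x := hx
    have h1 : ((x ^ α : ℝ)) ^ (s-1) = x ^ (α * (s-1)) := (Real.rpow_mul hx0.le α (s-1)).symm
    have h1' : α * (s - 1) = d - α := by
      rw [hs]
      field_simp
    have h2 : x ^ (d - 1) = x ^ (α - 1) * x ^ (d - α) := by
      rw [← Real.rpow_add hx0]; congr 1; ring
    have h3 : -τ * x ^ α = -β * Real.tan (Real.pi * α / 2) * x ^ α := by rw [hτ]; ring
    rw [h1, h1', h2, ← h3]
    field_simp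
  rw [hLHS, hsub, integral_const_mul, Jsin_all hs1 hs0 (-τ)]
  rw [Real.arctan_neg, mul_neg, Real.sin_neg, Real.cos_arctan,
    show ((1:ℝ) + (-τ)^2) = 1 + τ^2 by ring,
    show (1:ℝ) + s = s + 1 from add_comm 1 s, Real.Gamma_add_one hs0]
  have h4 : (1 / Real.sqrt (1+τ^2) : ℝ) = (1+τ^2) ^ (-(1/2) : ℝ) := by
    rw [Real.rpow_neg (by positivity), Real.sqrt_eq_rpow, one_div]
  have hpow : ((1 / Real.sqrt (1+τ^2) : ℝ)) ^ s = (1+τ^2) ^ (-s/2) := by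
    rw [h4, ← Real.rpow_mul (by positivity : (0:ℝ) ≤ 1+τ^2),
      show (-(1/2) * s : ℝ) = -s/2 by ring]
  rw [hpow]
  rw [hs]
  field_simp
end
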